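/- arXiv:2011.04721 — 11 statements merged into one kernel-verified Lean document; each statement's English description precedes it below -/
import Mathlib

section
/- Let f : ℝⁿ → ℝ be differentiable with L-Lipschitz gradient (L > 0) and σ > 0. Define g(x) ∈ ℝⁿ componentwise by g(x)ᵢ = (f(x + σ eᵢ) − f(x))/σ, where eᵢ is the i-th standard basis vector. Then for every x ∈ ℝⁿ, ‖g(x) − ∇f(x)‖ ≤ L σ √n / 2. -/
open scoped RealInnerProductSpace

lemma descent_aux {E : Type*} [NormedAddCommGroup E] [InnerProductSpace ℝ E] [CompleteSpace E]
    (f : E → ℝ) (L : ℝ) (hL : 0 ≤ L)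
    (hdiff : Differentiable ℝ f)
    (hlip : ∀ x y, ‖gradient f x - gradient f y‖ ≤ L * ‖x - y‖)
    (x v : E) :
    |f (x + v) - f x - ⟪gradient f x, v⟫| ≤ L * ‖v‖ ^ 2 / 2 := by
  set ψ : ℝ → ℝ := fun t => ⟪gradient f (x + t • v) - gradient f x, v⟫ with hψ
  have hderiv : ∀ t : ℝ, HasDerivAt (fun s : ℝ => f (x + s • v) - s * ⟪gradient f x, v⟫)
      (ψ t) t := by
    intro t
    have hc : HasDerivAt (fun s : ℝ => x + s • v) v t := by
      simpa using ((hasDerivAt_id t).smul_const v).const_add x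
    have hf : HasFDerivAt f (InnerProductSpace.toDual ℝ E (gradient f (x + t • v)))
        (x + t • v) := (hdiff _).hasGradientAt.hasFDerivAt
    have h1 : HasDerivAt (fun s : ℝ => f (x + s • v)) ⟪gradient f (x + t • v), v⟫ t := by
      exact (hf.comp_hasDerivAt t hc).congr_deriv (by rw [InnerProductSpace.toDual_apply_apply])
    have h2 : HasDerivAt (fun s : ℝ => s * ⟪gradient f x, v⟫) ⟪gradient f x, v⟫ t := by
      simpa using (hasDerivAt_id t).mul_const ⟪gradient f x, v⟫
    exact (h1.sub h2).congr_deriv (by simp only [hψ, inner_sub_left])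
  have hgradcont : Continuous fun y => gradient f y := by
    refine (LipschitzWith.of_dist_le_mul (K := L.toNNReal) fun y z => ?_).continuous
    rw [Real.coe_toNNReal L hL]
    simpa [dist_eq_norm] using hlip y z
  have hψcont : Continuous ψ := by
    apply Continuous.inner
    · exact (hgradcont.comp (by fun_prop)).sub continuous_const
    · exact continuous_const
  have hint : IntervalIntegrable ψ MeasureTheory.volume 0 1 :=
    hψcont.intervalIntegrable 0 1
  have hFTC : ∫ t in (0:ℝ)..1, ψ t = f (x + v) - f x - ⟪gradient f x, v⟫ := by
    have := intervalIntegral.integral_eq_sub_of_hasDerivAt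
      (f := fun s : ℝ => f (x + s • v) - s * ⟪gradient f x, v⟫)
      (fun t _ => hderiv t) hint
    simp only [one_smul, zero_smul, add_zero, one_mul, zero_mul, sub_zero] at this
    linarith [this]
  rw [← hFTC]
  have hbound : ∀ t ∈ Set.Icc (0:ℝ) 1, |ψ t| ≤ L * ‖v‖ ^ 2 * t := by
    intro t ht
    calc |ψ t| ≤ ‖gradient f (x + t • v) - gradient f x‖ * ‖v‖ := by
          simpa [hψ] using abs_real_inner_le_norm (gradient f (x + t • v) - gradient f x) v
      _ ≤ (L * ‖t • v‖) * ‖v‖ := by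
          gcongr
          · simpa using hlip (x + t • v) x
      _ = L * ‖v‖ ^ 2 * t := by
          rw [norm_smul, Real.norm_eq_abs, abs_of_nonneg ht.1]; ring
  calc |∫ t in (0:ℝ)..1, ψ t| ≤ ∫ t in (0:ℝ)..1, L * ‖v‖ ^ 2 * t := by
        refine intervalIntegral.abs_integral_le_integral_abs (by norm_num) |>.trans ?_
        refine intervalIntegral.integral_mono_on (by norm_num) (hint.abs) ?_ ?_
        · exact (continuous_const.mul continuous_id).intervalIntegrable 0 1
        · exact hbound
    _ = L * ‖v‖ ^ 2 / 2 := by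
        rw [intervalIntegral.integral_const_mul, integral_id]; ring

/-- Coordinate-wise forward finite-differencing gradient approximation with sampling
radius `σ` is accurate to within `L * σ * √n / 2` when `f` has `L`-Lipschitz gradient. -/
theorem stmt_1 {n : ℕ} (f : EuclideanSpace ℝ (Fin n) → ℝ) (L σ : ℝ)
    (hL : 0 < L) (hσ : 0 < σ)
    (hdiff : Differentiable ℝ f)
    (hlip : ∀ x y, ‖gradient f x - gradient f y‖ ≤ L * ‖x - y‖)
    (g : EuclideanSpace ℝ (Fin n) → EuclideanSpace ℝ (Fin n))
    (hg : ∀ x i, g x i = (f (x + σ • EuclideanSpace.single i 1) - f x) / σ)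
    (x : EuclideanSpace ℝ (Fin n)) :
    ‖g x - gradient f x‖ ≤ L * σ * Real.sqrt n / 2 := by
  have hcoord : ∀ i, |g x i - gradient f x i| ≤ L * σ / 2 := by
    intro i
    have hv : ‖σ • (EuclideanSpace.single i (1:ℝ))‖ = σ := by
      rw [norm_smul, EuclideanSpace.norm_single]
      simp [abs_of_pos hσ]
    have hinner : ⟪gradient f x, σ • EuclideanSpace.single i (1:ℝ)⟫ = σ * gradient f x i := by
      rw [real_inner_smul_right, EuclideanSpace.inner_single_right]
      simp [mul_comm]
    have := descent_aux f L hL.le hdiff hlip x (σ • EuclideanSpace.single i 1)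
    rw [hv, hinner] at this
    have heq : g x i - gradient f x i
        = (f (x + σ • EuclideanSpace.single i 1) - f x - σ * gradient f x i) / σ := by
      rw [hg x i]; field_simp
    rw [heq, abs_div, abs_of_pos hσ, div_le_div_iff₀ hσ (by norm_num : (0:ℝ) < 2)]
    nlinarith [this]
  have hnorm : ‖g x - gradient f x‖ ≤ Real.sqrt (n * (L * σ / 2) ^ 2) := by
    rw [EuclideanSpace.norm_eq]
    apply Real.sqrt_le_sqrt
    calc ∑ i, ‖(g x - gradient f x) i‖ ^ 2 ≤ ∑ _i : Fin n, (L * σ / 2) ^ 2 := by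
          apply Finset.sum_le_sum
          intro i _
          have : ‖(g x - gradient f x) i‖ = |g x i - gradient f x i| := by
            simp [Real.norm_eq_abs]
          rw [this]
          exact pow_le_pow_left₀ (abs_nonneg _) (hcoord i) 2
      _ = n * (L * σ / 2) ^ 2 := by simp [mul_comm]
  refine hnorm.trans_eq ?_
  rw [Real.sqrt_mul (Nat.cast_nonneg n), Real.sqrt_sq (by positivity)]
  ring
end

section
/- Let f : ℝⁿ → ℝ be differentiable, m-strongly convex, and have L-Lipschitz gradient, with 0 < m ≤ L. Let x ∈ ℝⁿ and let d ∈ ℝⁿ be a descent direction at x (⟨d, ∇f(x)⟩ < 0). If t > 0 satisfies the Armijo condition with equality, f(x + t d) = f(x) + (t/2)⟨d, ∇f(x)⟩, then (−⟨d, ∇f(x)⟩)/(L‖d‖²) ≤ t ≤ (−⟨d, ∇f(x)⟩)/(m‖d‖²). Moreover, the lower bound requires only the L-Lipschitz gradient hypothesis and the upper bound requires only m-strong convexity. -/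
open scoped RealInnerProductSpace

/-- Bounds on the step size `t` satisfying the Armijo condition (parameter `1/2`)
with equality, for an `m`-strongly convex function with `L`-Lipschitz gradient. -/
theorem stmt_2 {n : ℕ} (f : EuclideanSpace ℝ (Fin n) → ℝ) (m L : ℝ)
    (hm : 0 < m) (hmL : m ≤ L)
    (hdiff : Differentiable ℝ f)
    (hconv : ConvexOn ℝ Set.univ (fun y => f y - m / 2 * ‖y‖ ^ 2))
    (hlip : ∀ x y, ‖gradient f x - gradient f y‖ ≤ L * ‖x - y‖)
    (x d : EuclideanSpace ℝ (Fin n)) (hdesc : ⟪d, gradient f x⟫ < 0)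
    (t : ℝ) (ht : 0 < t)
    (harmijo : f (x + t • d) = f x + t / 2 * ⟪d, gradient f x⟫) :
    -⟪d, gradient f x⟫ / (L * ‖d‖ ^ 2) ≤ t ∧ t ≤ -⟪d, gradient f x⟫ / (m * ‖d‖ ^ 2) := by
  have hd : d ≠ 0 := by
    intro h
    rw [h] at hdesc
    simp at hdesc
  have hdn : (0:ℝ) < ‖d‖ ^ 2 := by
    have := norm_pos_iff.mpr hd
    positivity
  have hL : (0:ℝ) < L := lt_of_lt_of_le hm hmL
  set g₀ : ℝ := ⟪d, gradient f x⟫ with hg₀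
  have hg₀c : ∀ y, ⟪gradient f y, d⟫ = ⟪d, gradient f y⟫ := fun y => real_inner_comm _ _
  -- line derivative
  have hline : ∀ s : ℝ, HasDerivAt (fun s : ℝ => x + s • d) d s := by
    intro s
    simpa using ((hasDerivAt_id s).smul_const d).const_add x
  have hφ : ∀ s : ℝ, HasDerivAt (fun s : ℝ => f (x + s • d)) ⟪gradient f (x + s • d), d⟫ s := by
    intro s
    have h1 := (hdiff (x + s • d)).hasFDerivAt.comp_hasDerivAt s (hline s)
    have h2 : ⟪gradient f (x + s • d), d⟫ = fderiv ℝ f (x + s • d) d := by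
      rw [gradient, InnerProductSpace.toDual_symm_apply]
    rw [h2]
    exact h1
  have hnorm : ∀ s : ℝ, ‖x + s • d‖ ^ 2 = ‖x‖ ^ 2 + 2 * s * ⟪x, d⟫ + s ^ 2 * ‖d‖ ^ 2 := by
    intro s
    rw [← real_inner_self_eq_norm_sq, ← real_inner_self_eq_norm_sq (x := x),
      ← real_inner_self_eq_norm_sq (x := d)]
    rw [real_inner_add_add_self, real_inner_smul_right, real_inner_smul_left,
      real_inner_smul_right]
    ring
  constructor
  · -- lower bound, via Lipschitz gradient
    set h : ℝ → ℝ := fun s => L * ‖d‖ ^ 2 / 2 * s ^ 2 - f (x + s • d) with hh_def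
    have hh : ∀ s : ℝ, HasDerivAt h (L * ‖d‖ ^ 2 * s - ⟪gradient f (x + s • d), d⟫) s := by
      intro s
      have := ((hasDerivAt_pow 2 s).const_mul (L * ‖d‖ ^ 2 / 2)).sub (hφ s)
      refine this.congr_deriv ?_
      ring_nf
    have hmono : Monotone (fun s : ℝ => L * ‖d‖ ^ 2 * s - ⟪gradient f (x + s • d), d⟫) := by
      intro s u hsu
      have key : ⟪gradient f (x + u • d) - gradient f (x + s • d), d⟫ ≤ L * ‖d‖ ^ 2 * (u - s) := by
        calc ⟪gradient f (x + u • d) - gradient f (x + s • d), d⟫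
            ≤ ‖gradient f (x + u • d) - gradient f (x + s • d)‖ * ‖d‖ := real_inner_le_norm _ _
          _ ≤ (L * ‖(x + u • d) - (x + s • d)‖) * ‖d‖ := by
              gcongr
              exact hlip _ _
          _ = L * ‖d‖ ^ 2 * (u - s) := by
              have : (x + u • d) - (x + s • d) = (u - s) • d := by
                rw [sub_smul]; abel
              rw [this, norm_smul, Real.norm_eq_abs, abs_of_nonneg (by linarith)]
              ring
      have := inner_sub_left (𝕜 := ℝ) (gradient f (x + u • d)) (gradient f (x + s • d)) d
      dsimp only
      linarith [key, this.symm ▸ key]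
    have hconvh : ConvexOn ℝ Set.univ h := by
      apply Monotone.convexOn_univ_of_deriv (fun s => (hh s).differentiableAt)
      have heq : deriv h = fun s : ℝ => L * ‖d‖ ^ 2 * s - ⟪gradient f (x + s • d), d⟫ :=
        funext fun s => (hh s).deriv
      rw [heq]
      exact hmono
    have hslope := hconvh.le_slope_of_hasDerivAt (Set.mem_univ 0) (Set.mem_univ t) ht (hh 0)
    rw [slope_def_field] at hslope
    have h0 : h 0 = -f x := by simp [hh_def]
    have htv : h t = L * ‖d‖ ^ 2 / 2 * t ^ 2 - (f x + t / 2 * g₀) := by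
      simp only [hh_def]
      rw [harmijo]
    have hd0 : L * ‖d‖ ^ 2 * 0 - ⟪gradient f (x + (0:ℝ) • d), d⟫ = -g₀ := by
      rw [zero_smul, add_zero, hg₀c]
      ring
    have key : -g₀ ≤ L * ‖d‖ ^ 2 * t := by
      have hs : -g₀ ≤ (h t - h 0) / (t - 0) := hd0 ▸ hslope
      rw [h0, htv, sub_zero] at hs
      rw [le_div_iff₀ ht] at hs
      nlinarith
    rw [div_le_iff₀ (by positivity)]
    nlinarith
  · -- upper bound, via strong convexity
    set ψ : ℝ → ℝ := fun s => f (x + s • d) - m / 2 * ‖x + s • d‖ ^ 2 with hψ_def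
    have hψconv : ConvexOn ℝ Set.univ ψ := by
      have := hconv.comp_affineMap (AffineMap.lineMap x (x + d) : ℝ →ᵃ[ℝ] EuclideanSpace ℝ (Fin n))
      have heq : ((fun y => f y - m / 2 * ‖y‖ ^ 2) ∘
          (AffineMap.lineMap x (x + d) : ℝ →ᵃ[ℝ] EuclideanSpace ℝ (Fin n))) = ψ := by
        funext s
        simp only [Function.comp_apply, AffineMap.lineMap_apply_module, hψ_def]
        rw [show (1 - s) • x + s • (x + d) = x + s • d by module]
      have hpre : (AffineMap.lineMap x (x + d) : ℝ →ᵃ[ℝ] EuclideanSpace ℝ (Fin n)) ⁻¹' Set.univ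
          = Set.univ := Set.preimage_univ
      rw [hpre, heq] at this
      exact this
    have hψ : ∀ s : ℝ, HasDerivAt ψ
        (⟪gradient f (x + s • d), d⟫ - m / 2 * (2 * ⟪x + s • d, d⟫)) s := by
      intro s
      have hn : HasDerivAt (fun s : ℝ => ‖x + s • d‖ ^ 2) (2 * ⟪x + s • d, d⟫) s := by
        have := (hline s).inner ℝ (hline s)
        have heq : (fun s : ℝ => ⟪x + s • d, x + s • d⟫) = fun s : ℝ => ‖x + s • d‖ ^ 2 := by
          funext u
          rw [real_inner_self_eq_norm_sq]
        rw [heq] at this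
        refine this.congr_deriv ?_
        rw [real_inner_comm d (x + s • d)]
        ring
      exact (hφ s).sub (hn.const_mul (m / 2))
    have hslope := hψconv.le_slope_of_hasDerivAt (Set.mem_univ 0) (Set.mem_univ t) ht (hψ 0)
    rw [slope_def_field] at hslope
    have hixd : ⟪x + (0:ℝ) • d, d⟫ = ⟪x, d⟫ := by simp
    have hψ0 : ψ 0 = f x - m / 2 * ‖x‖ ^ 2 := by simp [hψ_def]
    have hψt : ψ t = f x + t / 2 * g₀
        - m / 2 * (‖x‖ ^ 2 + 2 * t * ⟪x, d⟫ + t ^ 2 * ‖d‖ ^ 2) := by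
      simp only [hψ_def]
      rw [harmijo, hnorm]
    have hder0 : ⟪gradient f (x + (0:ℝ) • d), d⟫ - m / 2 * (2 * ⟪x + (0:ℝ) • d, d⟫)
        = g₀ - m * ⟪x, d⟫ := by
      rw [hixd, zero_smul, add_zero, hg₀c]
      ring
    have key : m * ‖d‖ ^ 2 * t ≤ -g₀ := by
      have hs := hslope
      rw [hder0] at hs
      rw [hψ0, hψt, sub_zero] at hs
      rw [le_div_iff₀ ht] at hs
      nlinarith
    rw [le_div_iff₀ (by positivity)]
    nlinarith
end

section
/- Let f : ℝⁿ → ℝ be differentiable, m-strongly convex, and have L-Lipschitz gradient with 0 < m ≤ L. Let x ∈ ℝⁿ, let d ≠ 0 be a descent direction at x (⟨d, ∇f(x)⟩ < 0), set γ = (−⟨d, ∇f(x)⟩)/‖d‖², and let t₊ be a minimizer of t ↦ f(x + t d) over t ∈ ℝ. Then (γ/m)(1 − √(1 − m/L)) ≤ t₊ ≤ (γ/m)(1 + √(1 − m/L)). -/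
open scoped RealInnerProductSpace

lemma quad_root_bound (m L g t : ℝ) (hm : 0 < m) (hmL : m ≤ L) (hg : 0 < g)
    (hkey : m / 2 * t ^ 2 - g * t + g ^ 2 / (2 * L) ≤ 0) :
    g / m * (1 - Real.sqrt (1 - m / L)) ≤ t ∧ t ≤ g / m * (1 + Real.sqrt (1 - m / L)) := by
  have hL : (0:ℝ) < L := hm.trans_le hmL
  have hs1 : (0:ℝ) ≤ 1 - m / L := by
    have : m / L ≤ 1 := (div_le_one hL).mpr hmL
    linarith
  have hsq : (t - g / m) ^ 2 ≤ (g / m) ^ 2 * (1 - m / L) := by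
    have he : (g / m) ^ 2 * (1 - m / L) - (t - g / m) ^ 2
        = (2 / m) * (g * t - m / 2 * t ^ 2 - g ^ 2 / (2 * L)) := by
      field_simp
      ring
    have h2 : 0 ≤ (2 / m) * (g * t - m / 2 * t ^ 2 - g ^ 2 / (2 * L)) :=
      mul_nonneg (by positivity) (by linarith)
    linarith
  have habs : |t - g / m| ≤ g / m * Real.sqrt (1 - m / L) := by
    have h1 := Real.sqrt_le_sqrt hsq
    rw [Real.sqrt_sq_eq_abs] at h1
    rwa [Real.sqrt_mul (by positivity) _, Real.sqrt_sq (by positivity : (0:ℝ) ≤ g / m)] at h1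
  rw [abs_le] at habs
  constructor <;> nlinarith [habs.1, habs.2]

/-- Bounds on the exact line search minimizer `t₊` along a descent direction, for an
`m`-strongly convex function with `L`-Lipschitz gradient:
`(γ/m)(1 − √(1 − m/L)) ≤ t₊ ≤ (γ/m)(1 + √(1 − m/L))` where `γ = −⟨d, ∇f(x)⟩/‖d‖²`. -/
theorem stmt_4 {n : ℕ} (f : EuclideanSpace ℝ (Fin n) → ℝ) (m L : ℝ)
    (hm : 0 < m) (hmL : m ≤ L)
    (hdiff : Differentiable ℝ f)
    (hconv : ConvexOn ℝ Set.univ (fun y => f y - m / 2 * ‖y‖ ^ 2))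
    (hlip : ∀ x y, ‖gradient f x - gradient f y‖ ≤ L * ‖x - y‖)
    (x d : EuclideanSpace ℝ (Fin n)) (hd : d ≠ 0)
    (hdesc : ⟪d, gradient f x⟫ < 0)
    (γ : ℝ) (hγ : γ = -⟪d, gradient f x⟫ / ‖d‖ ^ 2)
    (tplus : ℝ) (htplus : ∀ t : ℝ, f (x + tplus • d) ≤ f (x + t • d)) :
    γ / m * (1 - Real.sqrt (1 - m / L)) ≤ tplus ∧
      tplus ≤ γ / m * (1 + Real.sqrt (1 - m / L)) := by
  have hL : (0:ℝ) < L := hm.trans_le hmL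
  have hLne : L ≠ 0 := ne_of_gt hL
  have hmne : m ≠ 0 := ne_of_gt hm
  have hDpos' : (0:ℝ) < ‖d‖ ^ 2 := pow_pos (norm_pos_iff.mpr hd) 2
  set D : ℝ := ‖d‖ ^ 2 with hD
  have hDpos : (0:ℝ) < D := hDpos'
  set G : ℝ := ⟪gradient f x, d⟫ with hG
  have hGd : G = ⟪d, gradient f x⟫ := real_inner_comm _ _
  have hγpos : 0 < γ := by
    rw [hγ]
    exact div_pos (by linarith) hDpos
  have hGγ : G = -γ * D := by
    rw [hGd, hγ]
    field_simp
  -- derivative of the line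
  have hφ : ∀ t : ℝ, HasDerivAt (fun t : ℝ => f (x + t • d)) ⟪gradient f (x + t • d), d⟫ t := by
    intro t
    have hline : HasDerivAt (fun t : ℝ => x + t • d) d t := by
      simpa using ((hasDerivAt_id t).smul_const d).const_add x
    have h1 : HasFDerivAt f ((InnerProductSpace.toDual ℝ _) (gradient f (x + t • d))) (x + t • d) :=
      hasGradientAt_iff_hasFDerivAt.mp (hdiff (x + t • d)).hasGradientAt
    simpa [InnerProductSpace.toDual_apply_apply, Function.comp_def] using h1.comp_hasDerivAt t hline
  have hpow : ∀ t : ℝ, HasDerivAt (fun t : ℝ => t ^ 2) (2 * t) t := by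
    intro t
    simpa using hasDerivAt_pow 2 t
  -- the quadratic expansion of ‖x + t • d‖²
  have hq_eq : ∀ t : ℝ, ‖x + t • d‖ ^ 2 = ‖x‖ ^ 2 + 2 * ⟪x, d⟫ * t + D * t ^ 2 := by
    intro t
    rw [norm_add_sq_real, real_inner_smul_right, norm_smul]
    simp only [Real.norm_eq_abs, mul_pow, sq_abs, hD]
    ring
  -- Part A : strong convexity lower bound at tplus
  set ψ : ℝ → ℝ := fun t => f (x + t • d) - m / 2 * (‖x‖ ^ 2 + 2 * ⟪x, d⟫ * t + D * t ^ 2)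
    with hψ
  have hψconv : ConvexOn ℝ Set.univ ψ := by
    have h := hconv.comp_affineMap (AffineMap.lineMap x (x + d))
    have heq : (fun y => f y - m / 2 * ‖y‖ ^ 2) ∘ (AffineMap.lineMap x (x + d)) = ψ := by
      funext t
      have hl : (AffineMap.lineMap x (x + d)) t = x + t • d := by
        simp only [AffineMap.lineMap_apply, vsub_eq_sub, add_sub_cancel_left, vadd_eq_add]
        exact add_comm _ _
      simp only [Function.comp_apply, hl, hψ, hq_eq t]
    rw [heq] at h
    simpa using h
  have hψd : ∀ t : ℝ, HasDerivAt ψ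
      (⟪gradient f (x + t • d), d⟫ - m / 2 * (2 * ⟪x, d⟫ + D * (2 * t))) t := by
    intro t
    have hquad : HasDerivAt (fun t : ℝ => ‖x‖ ^ 2 + 2 * ⟪x, d⟫ * t + D * t ^ 2)
        (2 * ⟪x, d⟫ + D * (2 * t)) t := by
      have h1 : HasDerivAt (fun t : ℝ => ‖x‖ ^ 2 + 2 * ⟪x, d⟫ * t) (2 * ⟪x, d⟫) t := by
        simpa using ((hasDerivAt_id t).const_mul (2 * ⟪x, d⟫)).const_add (‖x‖ ^ 2)
      exact h1.add ((hpow t).const_mul D)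
    exact (hφ t).sub (hquad.const_mul (m / 2))
  -- ψ 0 + t * ψ'(0) ≤ ψ t
  have hψlb : ∀ t : ℝ, ψ 0 + t * (G - m * ⟪x, d⟫) ≤ ψ t := by
    intro t
    have hψ'0 : HasDerivAt ψ (G - m * ⟪x, d⟫) 0 := by
      have h0 := hψd 0
      have he1 : x + (0:ℝ) • d = x := by simp
      rw [he1] at h0
      have he2 : ⟪gradient f x, d⟫ - m / 2 * (2 * ⟪x, d⟫ + D * (2 * 0)) = G - m * ⟪x, d⟫ := by
        rw [hG]; ring
      rwa [he2] at h0
    rcases lt_trichotomy t 0 with ht | ht | ht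
    · have hs := hψconv.slope_le_of_hasDerivAt (Set.mem_univ t) (Set.mem_univ 0) ht hψ'0
      rw [slope_def_field] at hs
      have h2 := (div_le_iff₀ (by linarith : (0:ℝ) < 0 - t)).mp hs
      nlinarith
    · simp [ht]
    · have hs := hψconv.le_slope_of_hasDerivAt (Set.mem_univ 0) (Set.mem_univ t) ht hψ'0
      rw [slope_def_field] at hs
      have h2 := (le_div_iff₀ (by linarith : (0:ℝ) < t - 0)).mp hs
      nlinarith
  have hA : f x + tplus * G + m / 2 * (D * tplus ^ 2) ≤ f (x + tplus • d) := by
    have h := hψlb tplus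
    simp only [hψ, zero_smul, add_zero, mul_zero, zero_pow, ne_eq, OfNat.ofNat_ne_zero,
      not_false_eq_true] at h
    nlinarith
  -- Part B : descent lemma at t0 = γ / L
  set t0 : ℝ := γ / L with ht0
  have ht0pos : 0 < t0 := div_pos hγpos hL
  set ρ : ℝ → ℝ := fun t => f x + t * G + L / 2 * (D * t ^ 2) - f (x + t • d) with hρ
  have hρd : ∀ t : ℝ, HasDerivAt ρ
      (G + L / 2 * (D * (2 * t)) - ⟪gradient f (x + t • d), d⟫) t := by
    intro t
    have g1 : HasDerivAt (fun s : ℝ => f x + s * G) G t := by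
      simpa using ((hasDerivAt_id t).mul_const G).const_add (f x)
    have g2 : HasDerivAt (fun s : ℝ => L / 2 * (D * s ^ 2)) (L / 2 * (D * (2 * t))) t :=
      ((hpow t).const_mul D).const_mul (L / 2)
    exact (g1.add g2).sub (hφ t)
  have hmono : MonotoneOn ρ (Set.Ici 0) := by
    apply monotoneOn_of_deriv_nonneg (convex_Ici 0)
    · exact fun t _ => ((hρd t).differentiableAt).continuousAt.continuousWithinAt
    · intro t _
      exact ((hρd t).differentiableAt).differentiableWithinAt
    · intro t ht
      rw [interior_Ici] at ht
      have ht' : (0:ℝ) < t := ht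
      rw [(hρd t).deriv]
      have hip : ⟪gradient f (x + t • d) - gradient f x, d⟫ ≤ L * t * D := by
        calc ⟪gradient f (x + t • d) - gradient f x, d⟫
            ≤ ‖gradient f (x + t • d) - gradient f x‖ * ‖d‖ := real_inner_le_norm _ _
          _ ≤ (L * ‖(x + t • d) - x‖) * ‖d‖ := by
              have h := hlip (x + t • d) x
              nlinarith [norm_nonneg d]
          _ = L * t * D := by
              rw [add_sub_cancel_left, norm_smul, Real.norm_eq_abs, abs_of_pos ht', hD]
              ring
      have hsub : ⟪gradient f (x + t • d) - gradient f x, d⟫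
          = ⟪gradient f (x + t • d), d⟫ - G := by rw [inner_sub_left, hG]
      rw [hsub] at hip
      linarith
  have hB : f (x + t0 • d) ≤ f x + t0 * G + L / 2 * (D * t0 ^ 2) := by
    have h0 : ρ 0 ≤ ρ t0 := hmono (Set.mem_Ici.mpr le_rfl) (Set.mem_Ici.mpr ht0pos.le) ht0pos.le
    have hρ0 : ρ 0 = 0 := by simp [hρ]
    rw [hρ0] at h0
    simp only [hρ] at h0
    linarith
  -- Combine into the quadratic inequality
  have hkey : m / 2 * tplus ^ 2 - γ * tplus + γ ^ 2 / (2 * L) ≤ 0 := by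
    have hc : tplus * G + m / 2 * (D * tplus ^ 2) ≤ t0 * G + L / 2 * (D * t0 ^ 2) := by
      have := le_trans hA (le_trans (htplus t0) hB)
      linarith
    have ht0G : t0 * G + L / 2 * (D * t0 ^ 2) = -(γ ^ 2 * D) / (2 * L) := by
      rw [ht0, hGγ]; field_simp; ring
    rw [ht0G] at hc
    have hDA : D * (m / 2 * tplus ^ 2 - γ * tplus + γ ^ 2 / (2 * L)) ≤ 0 := by
      have heq : D * (m / 2 * tplus ^ 2 - γ * tplus + γ ^ 2 / (2 * L))
          = tplus * G + m / 2 * (D * tplus ^ 2) - -(γ ^ 2 * D) / (2 * L) := by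
        rw [hGγ]; field_simp; ring
      rw [heq]; linarith
    have hDA' : D * (m / 2 * tplus ^ 2 - γ * tplus + γ ^ 2 / (2 * L)) ≤ D * 0 := by
      rw [mul_zero]; exact hDA
    exact le_of_mul_le_mul_left hDA' hDpos
  exact quad_root_bound m L γ tplus hm hmL hγpos hkey
end

section
/- Let f : ℝⁿ → ℝ be differentiable, m-strongly convex, and have L-Lipschitz gradient with 0 < m ≤ L. Let x ∈ ℝⁿ, let d ≠ 0 be a descent direction at x (⟨d, ∇f(x)⟩ < 0), set γ = (−⟨d, ∇f(x)⟩)/‖d‖², and let c₂ ∈ (0, 1). If t > 0 satisfies both the Armijo condition f(x + t d) ≤ f(x) + (t/2)⟨d, ∇f(x)⟩ and the strong Wolfe curvature condition |⟨d, ∇f(x + t d)⟩| ≤ c₂ |⟨d, ∇f(x)⟩|, then γ(1 − c₂)/L ≤ t ≤ γ/m. Moreover the lower bound requires only the curvature condition and the L-Lipschitz gradient hypothesis, and the upper bound requires only the Armijo condition and m-strong convexity. -/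
open scoped RealInnerProductSpace

private lemma line_hasDerivAt {n : ℕ} (f : EuclideanSpace ℝ (Fin n) → ℝ)
    (hdiff : Differentiable ℝ f) (x d : EuclideanSpace ℝ (Fin n)) (s₀ : ℝ) :
    HasDerivAt (fun s : ℝ => f (x + s • d)) ⟪d, gradient f (x + s₀ • d)⟫ s₀ := by
  have hline : HasDerivAt (fun s : ℝ => x + s • d) d s₀ := by
    simpa using ((hasDerivAt_id s₀).smul_const d).const_add x
  have hg := (hdiff (x + s₀ • d)).hasGradientAt
  rw [hasGradientAt_iff_hasFDerivAt] at hg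
  simpa [Function.comp_def, mul_comm] using hg.comp_hasDerivAt s₀ hline

/-- Bounds on a step size satisfying both the Armijo condition (parameter `1/2`) and the
strong Wolfe curvature condition (parameter `c₂`), for an `m`-strongly convex function
with `L`-Lipschitz gradient: `γ(1 − c₂)/L ≤ t ≤ γ/m` where `γ = −⟨d, ∇f(x)⟩/‖d‖²`. -/
theorem stmt_5 {n : ℕ} (f : EuclideanSpace ℝ (Fin n) → ℝ) (m L : ℝ)
    (hm : 0 < m) (hmL : m ≤ L)
    (hdiff : Differentiable ℝ f)
    (hconv : ConvexOn ℝ Set.univ (fun y => f y - m / 2 * ‖y‖ ^ 2))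
    (hlip : ∀ x y, ‖gradient f x - gradient f y‖ ≤ L * ‖x - y‖)
    (x d : EuclideanSpace ℝ (Fin n)) (hd : d ≠ 0)
    (hdesc : ⟪d, gradient f x⟫ < 0)
    (γ : ℝ) (hγ : γ = -⟪d, gradient f x⟫ / ‖d‖ ^ 2)
    (c₂ : ℝ) (hc₂ : c₂ ∈ Set.Ioo (0 : ℝ) 1)
    (t : ℝ) (ht : 0 < t)
    (harmijo : f (x + t • d) ≤ f x + t / 2 * ⟪d, gradient f x⟫)
    (hwolfe : |⟪d, gradient f (x + t • d)⟫| ≤ c₂ * |⟪d, gradient f x⟫|) :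
    γ * (1 - c₂) / L ≤ t ∧ t ≤ γ / m := by
  have hL : (0:ℝ) < L := hm.trans_le hmL
  have hdd : (0:ℝ) < ‖d‖ ^ 2 := by
    have : 0 < ‖d‖ := norm_pos_iff.mpr hd
    positivity
  set g0 : ℝ := ⟪d, gradient f x⟫ with hg0def
  have habs : |g0| = -g0 := abs_of_neg hdesc
  have hnorm : ∀ s : ℝ, ‖x + s • d‖ ^ 2 = ‖x‖ ^ 2 + 2 * s * ⟪x, d⟫ + s ^ 2 * ‖d‖ ^ 2 := by
    intro s
    rw [norm_add_sq_real, real_inner_smul_right, norm_smul]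
    simp [mul_pow, sq_abs]
    ring
  constructor
  · -- lower bound
    have h1 : c₂ * g0 ≤ ⟪d, gradient f (x + t • d)⟫ := by
      have := (neg_abs_le ⟪d, gradient f (x + t • d)⟫).trans' (neg_le_neg hwolfe)
      rw [habs] at this
      linarith [neg_abs_le ⟪d, gradient f (x + t • d)⟫]
    have h2 : ⟪d, gradient f (x + t • d)⟫ - g0 = ⟪d, gradient f (x + t • d) - gradient f x⟫ := by
      rw [inner_sub_right]
    have h3 : ⟪d, gradient f (x + t • d) - gradient f x⟫
        ≤ ‖d‖ * ‖gradient f (x + t • d) - gradient f x‖ := real_inner_le_norm _ _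
    have h4 : ‖gradient f (x + t • d) - gradient f x‖ ≤ L * (t * ‖d‖) := by
      have := hlip (x + t • d) x
      simpa [norm_smul, abs_of_pos ht] using this
    have key : (1 - c₂) * (-g0) ≤ L * t * ‖d‖ ^ 2 := by
      have hdn : (0:ℝ) ≤ ‖d‖ := norm_nonneg d
      nlinarith [h3.trans (by nlinarith : ‖d‖ * ‖gradient f (x + t • d) - gradient f x‖
        ≤ ‖d‖ * (L * (t * ‖d‖)))]
    rw [hγ, div_le_iff₀ hL, div_mul_eq_mul_div, div_le_iff₀ hdd]
    nlinarith
  · -- upper bound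
    set Φ : ℝ → ℝ := fun s => f (x + s • d) - m / 2 * ‖x + s • d‖ ^ 2 with hΦ
    have hΦconv : ConvexOn ℝ Set.univ Φ := by
      have := hconv.comp_affineMap (AffineMap.lineMap (x : EuclideanSpace ℝ (Fin n)) (x + d))
      have he : ∀ s : ℝ, (AffineMap.lineMap x (x + d)) s = x + s • d := by
        intro s; simp [AffineMap.lineMap_apply]; abel
      have hΦeq : Φ = (fun y => f y - m / 2 * ‖y‖ ^ 2) ∘ ⇑(AffineMap.lineMap x (x + d)) := by
        ext s; simp [Φ, he s, Function.comp_def]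
      rw [Set.preimage_univ] at this
      rw [hΦeq]
      exact this
    have hΦderiv : HasDerivAt Φ (g0 - m * ⟪x, d⟫) 0 := by
      have h1 : HasDerivAt (fun s : ℝ => f (x + s • d)) g0 0 := by
        simpa [hg0def] using line_hasDerivAt f hdiff x d 0
      have h2 : HasDerivAt (fun s : ℝ => m / 2 * (‖x‖ ^ 2 + 2 * s * ⟪x, d⟫ + s ^ 2 * ‖d‖ ^ 2))
          (m * ⟪x, d⟫) 0 := by
        have : HasDerivAt (fun s : ℝ => ‖x‖ ^ 2 + 2 * s * ⟪x, d⟫ + s ^ 2 * ‖d‖ ^ 2)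
            (2 * ⟪x, d⟫ + 2 * 0 * ‖d‖ ^ 2) 0 := by
          have ha : HasDerivAt (fun s : ℝ => 2 * s * ⟪x, d⟫) (2 * ⟪x, d⟫) 0 := by
            simpa using (((hasDerivAt_id (0:ℝ)).const_mul 2).mul_const ⟪x, d⟫)
          have hb : HasDerivAt (fun s : ℝ => s ^ 2 * ‖d‖ ^ 2) (2 * 0 * ‖d‖ ^ 2) 0 := by
            simpa using ((hasDerivAt_pow 2 (0:ℝ)).mul_const (‖d‖ ^ 2))
          simpa [← add_assoc] using (ha.add hb).const_add (‖x‖ ^ 2)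
        have := this.const_mul (m / 2)
        rw [show m * ⟪x, d⟫ = m / 2 * (2 * ⟪x, d⟫ + 2 * 0 * ‖d‖ ^ 2) by ring]
        exact this
      have heq : Φ = fun s : ℝ =>
          f (x + s • d) - m / 2 * (‖x‖ ^ 2 + 2 * s * ⟪x, d⟫ + s ^ 2 * ‖d‖ ^ 2) := by
        ext s; simp [Φ, hnorm s]
      rw [heq]
      exact h1.sub h2
    have hslope := hΦconv.le_slope_of_hasDerivAt (Set.mem_univ 0) (Set.mem_univ t) ht hΦderiv
    rw [slope_def_field] at hslope
    rw [sub_zero] at hslope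
    have hmul : (g0 - m * ⟪x, d⟫) * t ≤ Φ t - Φ 0 := (le_div_iff₀ ht).mp hslope
    have e0 : Φ 0 = f x - m / 2 * ‖x‖ ^ 2 := by simp [Φ]
    have et : Φ t = f (x + t • d)
        - m / 2 * (‖x‖ ^ 2 + 2 * t * ⟪x, d⟫ + t ^ 2 * ‖d‖ ^ 2) := by
      simp [Φ, hnorm t]
    have h5 : m * t * ‖d‖ ^ 2 ≤ -g0 := by
      rw [e0, et] at hmul
      nlinarith [harmijo]
    rw [hγ, div_div, le_div_iff₀ (by positivity : (0:ℝ) < ‖d‖ ^ 2 * m)]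
    nlinarith
end

section
/- Let f : ℝⁿ → ℝ be differentiable and m-strongly convex (m > 0) with minimizer x_* and minimum value f_* = f(x_*). Let t_min > 0 and let (x_k) be a sequence with x_{k+1} = x_k − t_k ∇f(x_k) where each t_k ≥ t_min satisfies the Armijo condition f(x_k − t_k ∇f(x_k)) ≤ f(x_k) − (t_k/2)‖∇f(x_k)‖². Then for all k ≥ 0, f(x_k) − f_* ≤ (1 − m t_min)^k (f(x_0) − f_*). -/
open scoped RealInnerProductSpace

/-- First-order inequality for strongly convex differentiable functions. -/
lemma strong_first_order {n : ℕ} (f : EuclideanSpace ℝ (Fin n) → ℝ) (m : ℝ)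
    (hdiff : Differentiable ℝ f)
    (hconv : ConvexOn ℝ Set.univ (fun y => f y - m / 2 * ‖y‖ ^ 2))
    (x y : EuclideanSpace ℝ (Fin n)) :
    f x + ⟪gradient f x, y - x⟫ + m / 2 * ‖y - x‖ ^ 2 ≤ f y := by
  set d : EuclideanSpace ℝ (Fin n) := y - x with hd
  set φ : ℝ → ℝ := fun s => f (s • d + x) - m / 2 * ‖s • d + x‖ ^ 2 with hφ
  -- convexity of the restriction to the line
  have hφconv : ConvexOn ℝ Set.univ φ := by
    have h := hconv.comp_affineMap (AffineMap.lineMap x y)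
    rw [Set.preimage_univ] at h
    have he : φ = (fun z => f z - m / 2 * ‖z‖ ^ 2) ∘ (AffineMap.lineMap x y) := by
      funext s
      simp only [Function.comp_apply, AffineMap.lineMap_apply_module', hφ, hd]
    rw [he]
    exact h
  -- derivative of the restriction at 0
  have hc : HasDerivAt (fun s : ℝ => s • d + x) d 0 := by
    simpa using ((hasDerivAt_id (0 : ℝ)).smul_const d).add_const x
  have hfd : HasFDerivAt f ((InnerProductSpace.toDual ℝ _) (gradient f x)) x :=
    hasGradientAt_iff_hasFDerivAt.mp (hdiff x).hasGradientAt
  have hfd' : HasFDerivAt f ((InnerProductSpace.toDual ℝ _) (gradient f x))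
      ((0 : ℝ) • d + x) := by simpa using hfd
  have h1 : HasDerivAt (fun s : ℝ => f (s • d + x)) (⟪gradient f x, d⟫) 0 := by
    have := hfd'.comp_hasDerivAt 0 hc
    simpa [InnerProductSpace.toDual_apply_apply, Function.comp_def] using this
  have h2 : HasDerivAt (fun s : ℝ => m / 2 * ‖s • d + x‖ ^ 2)
      (m / 2 * (2 * ⟪(0 : ℝ) • d + x, d⟫)) 0 := (hc.norm_sq).const_mul (m / 2)
  have hder : HasDerivAt φ (⟪gradient f x, d⟫ - m / 2 * (2 * ⟪(0 : ℝ) • d + x, d⟫)) 0 :=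
    h1.sub h2
  -- slope inequality
  have hs := hφconv.le_slope_of_hasDerivAt (Set.mem_univ (0 : ℝ)) (Set.mem_univ (1 : ℝ))
    one_pos hder
  rw [slope_def_field] at hs
  have hφ0 : φ 0 = f x - m / 2 * ‖x‖ ^ 2 := by simp [hφ]
  have hφ1 : φ 1 = f y - m / 2 * ‖y‖ ^ 2 := by
    have h1y : d + x = y := by rw [hd]; abel
    simp [hφ, h1y]
  have hxd : ⟪(0 : ℝ) • d + x, d⟫ = ⟪x, d⟫ := by simp
  have hnorm : ‖y‖ ^ 2 = ‖x‖ ^ 2 + 2 * ⟪x, d⟫ + ‖d‖ ^ 2 := by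
    have hy : y = x + d := by simp [hd]
    rw [hy, norm_add_sq_real]
  rw [hφ0, hφ1, hxd] at hs
  have : (1 : ℝ) - 0 = 1 := by norm_num
  rw [this, div_one] at hs
  have hnorm' : m / 2 * ‖y‖ ^ 2 = m / 2 * ‖x‖ ^ 2 + m * ⟪x, d⟫ + m / 2 * ‖d‖ ^ 2 := by
    rw [hnorm]; ring
  linarith [hs, hnorm']

/-- Linear convergence of gradient descent with Armijo step sizes bounded below by
`t_min` on an `m`-strongly convex function:
`f(x_k) − f_* ≤ (1 − m t_min)^k (f(x_0) − f_*)`. -/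
theorem stmt_6 {n : ℕ} (f : EuclideanSpace ℝ (Fin n) → ℝ) (m : ℝ) (hm : 0 < m)
    (hdiff : Differentiable ℝ f)
    (hconv : ConvexOn ℝ Set.univ (fun y => f y - m / 2 * ‖y‖ ^ 2))
    (xstar : EuclideanSpace ℝ (Fin n)) (hmin : ∀ y, f xstar ≤ f y)
    (tmin : ℝ) (htmin : 0 < tmin)
    (x : ℕ → EuclideanSpace ℝ (Fin n)) (t : ℕ → ℝ)
    (ht : ∀ k, tmin ≤ t k)
    (hstep : ∀ k, x (k + 1) = x k - t k • gradient f (x k))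
    (harmijo : ∀ k,
      f (x k - t k • gradient f (x k)) ≤ f (x k) - t k / 2 * ‖gradient f (x k)‖ ^ 2) :
    ∀ k : ℕ, f (x k) - f xstar ≤ (1 - m * tmin) ^ k * (f (x 0) - f xstar) := by
  -- PL inequality: 2 m (f x_k − f_*) ≤ ‖∇f(x_k)‖²
  have hPL : ∀ k, 2 * m * (f (x k) - f xstar) ≤ ‖gradient f (x k)‖ ^ 2 := by
    intro k
    set g := gradient f (x k) with hg
    set w := xstar - x k with hw
    have h := strong_first_order f m hdiff hconv (x k) xstar
    have hsq : (0:ℝ) ≤ ‖m • w + g‖ ^ 2 := by positivity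
    have hexp : ‖m • w + g‖ ^ 2 = m ^ 2 * ‖w‖ ^ 2 + 2 * (m * ⟪w, g⟫) + ‖g‖ ^ 2 := by
      rw [norm_add_sq_real, norm_smul, real_inner_smul_left]
      rw [Real.norm_eq_abs, mul_pow, sq_abs]
    have hcomm : ⟪g, w⟫ = ⟪w, g⟫ := real_inner_comm _ _
    rw [hexp] at hsq
    have h' : f (x k) + ⟪w, g⟫ + m / 2 * ‖w‖ ^ 2 ≤ f xstar := by
      rw [← hcomm]; exact h
    nlinarith [mul_le_mul_of_nonneg_left h' (by linarith : (0:ℝ) ≤ 2 * m), hsq]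
  -- per-step contraction
  have hstep' : ∀ k, f (x (k + 1)) - f xstar ≤ (1 - m * tmin) * (f (x k) - f xstar) := by
    intro k
    have ha := harmijo k
    rw [← hstep k] at ha
    have htk := ht k
    have hpl := hPL k
    have hgnn : (0:ℝ) ≤ ‖gradient f (x k)‖ ^ 2 := by positivity
    have hDk : 0 ≤ f (x k) - f xstar := by linarith [hmin (x k)]
    nlinarith [ha, htk, hpl, hgnn, hDk, htmin.le]
  have hDnn : ∀ k, 0 ≤ f (x k) - f xstar := fun k => by linarith [hmin (x k)]
  rcases le_or_gt 0 (1 - m * tmin) with hc | hc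
  · intro k
    induction k with
    | zero => simp
    | succ k ih =>
      calc f (x (k + 1)) - f xstar ≤ (1 - m * tmin) * (f (x k) - f xstar) := hstep' k
        _ ≤ (1 - m * tmin) * ((1 - m * tmin) ^ k * (f (x 0) - f xstar)) :=
            mul_le_mul_of_nonneg_left ih hc
        _ = (1 - m * tmin) ^ (k + 1) * (f (x 0) - f xstar) := by ring
  · -- degenerate case: contraction factor negative forces f(x₀) = f_*
    have hD0 : f (x 0) - f xstar = 0 := by
      have h1 := hstep' 0
      have := hDnn 1
      nlinarith [hDnn 0]
    have hall : ∀ k, f (x k) - f xstar = 0 := by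
      intro k
      induction k with
      | zero => exact hD0
      | succ k ih =>
        have h1 := hstep' k
        rw [ih, mul_zero] at h1
        exact le_antisymm h1 (hDnn (k + 1))
    intro k
    rw [hall k, hD0, mul_zero]
end

section
/- Let f : ℝⁿ → ℝ be differentiable and m-strongly convex (m > 0) with minimizer x_* and minimum value f_* = f(x_*). Let x ∈ ℝⁿ, g ∈ ℝⁿ with ‖g − ∇f(x)‖ ≤ ρ for some ρ ≥ 0, and let t > 0 satisfy the approximate Armijo condition f(x − t g) ≤ f(x) − (t/2)‖g‖². Then f(x − t g) − f_* ≤ (1 − m t)(f(x) − f_*) + t ρ ‖∇f(x)‖. -/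
open scoped RealInnerProductSpace

section Aux

variable {E : Type*} [NormedAddCommGroup E] [InnerProductSpace ℝ E] [CompleteSpace E]

lemma aux_line_hasDerivAt (x v : E) (s : ℝ) :
    HasDerivAt (fun s : ℝ => x + s • v) v s := by
  simpa using ((hasDerivAt_id s).smul_const v).const_add x

/-- First-order strong convexity inequality. -/
lemma aux_strong_lower (f : E → ℝ) (m : ℝ) (hdiff : Differentiable ℝ f)
    (hconv : ConvexOn ℝ Set.univ (fun y => f y - m / 2 * ‖y‖ ^ 2)) (x y : E) :
    f x + ⟪gradient f x, y - x⟫ + m / 2 * ‖y - x‖ ^ 2 ≤ f y := by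
  set v := y - x with hv
  set φ : ℝ → ℝ := fun s => f (x + s • v) - m / 2 * ‖x + s • v‖ ^ 2 with hφdef
  -- convexity of φ
  have hφc : ConvexOn ℝ Set.univ φ := by
    have h1 := hconv.comp_affineMap (AffineMap.lineMap x y : ℝ →ᵃ[ℝ] E)
    have heq : ((fun y => f y - m / 2 * ‖y‖ ^ 2) ∘ (AffineMap.lineMap x y : ℝ →ᵃ[ℝ] E)) = φ := by
      funext s
      have harg : (AffineMap.lineMap x y s : E) = x + s • v := by
        simp [AffineMap.lineMap_apply, hv]; abel
      simp only [Function.comp_apply, harg, φ]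
    rw [heq, Set.preimage_univ] at h1
    exact h1
  -- derivative of φ at 0
  have hnorm : ∀ s : ℝ, HasDerivAt (fun s : ℝ => ‖x + s • v‖ ^ 2)
      (2 * ⟪x + s • v, v⟫) s := by
    intro s
    have h2 := HasDerivAt.inner ℝ (aux_line_hasDerivAt x v s) (aux_line_hasDerivAt x v s)
    have : (fun s : ℝ => ⟪x + s • v, x + s • v⟫) = fun s : ℝ => ‖x + s • v‖ ^ 2 := by
      funext s; rw [real_inner_self_eq_norm_sq]
    rw [this] at h2
    exact h2.congr_deriv (by rw [real_inner_comm]; ring)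
  have hφd : HasDerivAt φ ((fderiv ℝ f x) v - m / 2 * (2 * ⟪x, v⟫)) 0 := by
    have hf0 : HasDerivAt (fun s : ℝ => f (x + s • v)) ((fderiv ℝ f (x + (0:ℝ) • v)) v) 0 :=
      (hdiff (x + (0:ℝ) • v)).hasFDerivAt.comp_hasDerivAt 0 (aux_line_hasDerivAt x v 0)
    have := hf0.sub ((hnorm 0).const_mul (m / 2))
    exact this.congr_deriv (by simp)
  -- slope inequality
  have hslope := hφc.le_slope_of_hasDerivAt (Set.mem_univ 0) (Set.mem_univ 1) one_pos hφd
  rw [slope_def_field] at hslope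
  have hφ1 : φ 1 = f y - m / 2 * ‖y‖ ^ 2 := by
    simp [φ, hv]
  have hφ0 : φ 0 = f x - m / 2 * ‖x‖ ^ 2 := by simp [φ]
  have hgrad : ⟪gradient f x, v⟫ = (fderiv ℝ f x) v := by
    rw [gradient]
    exact InnerProductSpace.toDual_symm_apply
  have hns : ‖x + v‖ ^ 2 = ‖x‖ ^ 2 + 2 * ⟪x, v⟫ + ‖v‖ ^ 2 := by
    exact norm_add_sq_real x v
  have hyx : x + v = y := by rw [hv]; abel
  rw [hφ1, hφ0] at hslope
  norm_num at hslope
  rw [← hyx] at hslope ⊢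
  rw [hgrad]
  have hns' : m / 2 * ‖x + v‖ ^ 2
      = m / 2 * ‖x‖ ^ 2 + m * ⟪x, v⟫ + m / 2 * ‖v‖ ^ 2 := by rw [hns]; ring
  linarith [hslope, hns']

end Aux

/-- One-step decrease bound for an approximate-gradient step satisfying the approximate
Armijo condition, on an `m`-strongly convex function:
`f(x − t g) − f_* ≤ (1 − m t)(f(x) − f_*) + t ρ ‖∇f(x)‖`. -/
theorem stmt_8 {n : ℕ} (f : EuclideanSpace ℝ (Fin n) → ℝ) (m : ℝ) (hm : 0 < m)
    (hdiff : Differentiable ℝ f)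
    (hconv : ConvexOn ℝ Set.univ (fun y => f y - m / 2 * ‖y‖ ^ 2))
    (xstar : EuclideanSpace ℝ (Fin n)) (hmin : ∀ y, f xstar ≤ f y)
    (x g : EuclideanSpace ℝ (Fin n)) (ρ : ℝ) (hρ : 0 ≤ ρ)
    (hg : ‖g - gradient f x‖ ≤ ρ)
    (t : ℝ) (ht : 0 < t)
    (harmijo : f (x - t • g) ≤ f x - t / 2 * ‖g‖ ^ 2) :
    f (x - t • g) - f xstar ≤
      (1 - m * t) * (f x - f xstar) + t * ρ * ‖gradient f x‖ := by
  set G := gradient f x with hG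
  set N := ‖G‖ with hN
  set A := ‖g‖ with hA
  have hN0 : 0 ≤ N := norm_nonneg _
  have hA0 : 0 ≤ A := norm_nonneg _
  -- PL inequality: 2 m (f x - f xstar) ≤ N ^ 2
  have hPL : 2 * m * (f x - f xstar) ≤ N ^ 2 := by
    have hsc := aux_strong_lower f m hdiff hconv x xstar
    have hinner : -(N * ‖xstar - x‖) ≤ ⟪G, xstar - x⟫ :=
      neg_le_of_abs_le (abs_real_inner_le_norm G (xstar - x))
    nlinarith [sq_nonneg (N - m * ‖xstar - x‖), norm_nonneg (xstar - x)]
  -- N ≤ A + ρ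
  have hNA : N ≤ A + ρ := by
    calc N = ‖g - (g - G)‖ := by rw [hN]; congr 1; abel
    _ ≤ ‖g‖ + ‖g - G‖ := norm_sub_le _ _
    _ ≤ A + ρ := by rw [hA]; exact add_le_add le_rfl hg
  -- N^2 ≤ A^2 + 2 ρ N
  have hN2 : N ^ 2 ≤ A ^ 2 + 2 * ρ * N := by
    nlinarith [mul_nonneg hN0 (sub_nonneg.2 hNA), sq_nonneg (A - N)]
  -- key : m * (f x - f xstar) ≤ A^2/2 + ρ * N
  have hkey : m * (f x - f xstar) ≤ A ^ 2 / 2 + ρ * N := by nlinarith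
  have hDpos : 0 ≤ f x - f xstar := sub_nonneg.2 (hmin x)
  nlinarith [mul_le_mul_of_nonneg_left hkey ht.le]
end

section
/- Let f : ℝⁿ → ℝ be convex and differentiable with L-Lipschitz gradient (L > 0). Let x ∈ ℝⁿ and let d ≠ 0 be a descent direction at x (⟨d, ∇f(x)⟩ < 0). If t₊ ∈ ℝ is a minimizer of t ↦ f(x + t d), then t₊ ≥ (−⟨d, ∇f(x)⟩)/(2 L ‖d‖²). -/
open scoped RealInnerProductSpace

/-- Lower bound on the exact line search minimizer along a descent direction for a convex
function with `L`-Lipschitz gradient: `t₊ ≥ −⟨d, ∇f(x)⟩/(2 L ‖d‖²)`. -/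
theorem stmt_9 {n : ℕ} (f : EuclideanSpace ℝ (Fin n) → ℝ) (L : ℝ) (hL : 0 < L)
    (hconv : ConvexOn ℝ Set.univ f)
    (hdiff : Differentiable ℝ f)
    (hlip : ∀ x y, ‖gradient f x - gradient f y‖ ≤ L * ‖x - y‖)
    (x d : EuclideanSpace ℝ (Fin n)) (hd : d ≠ 0)
    (hdesc : ⟪d, gradient f x⟫ < 0)
    (tplus : ℝ) (htplus : ∀ t : ℝ, f (x + tplus • d) ≤ f (x + t • d)) :
    -⟪d, gradient f x⟫ / (2 * L * ‖d‖ ^ 2) ≤ tplus := by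
  set φ : ℝ → ℝ := fun t => f (x + t • d) with hφ
  set g : ℝ → ℝ := fun t => ⟪gradient f (x + t • d), d⟫ with hg
  have hdnorm : 0 < ‖d‖ := norm_pos_iff.mpr hd
  set K : ℝ := L * ‖d‖ ^ 2 with hK
  have hKpos : 0 < K := by positivity
  -- derivative of φ
  have hφder : ∀ t : ℝ, HasDerivAt φ (g t) t := by
    intro t
    have hc : HasDerivAt (fun t : ℝ => x + t • d) d t := by
      simpa using ((hasDerivAt_id t).smul_const d).const_add x
    have hf := ((hdiff (x + t • d)).hasGradientAt).hasFDerivAt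
    have := hf.comp_hasDerivAt t hc
    simpa [g, φ, Function.comp_def, InnerProductSpace.toDual_apply_apply] using this
  -- g0 = ⟪d, gradient f x⟫
  have hg0 : g 0 = ⟪d, gradient f x⟫ := by
    simp only [g, zero_smul, add_zero]
    exact real_inner_comm _ _
  have hg0neg : g 0 < 0 := by rw [hg0]; exact hdesc
  -- Lipschitz-type bound on g for s ≥ 0 : g s - g 0 ≤ K * s
  have hglip : ∀ s : ℝ, 0 ≤ s → g s - g 0 ≤ K * s := by
    intro s hs
    have h1 : g s - g 0 = ⟪gradient f (x + s • d) - gradient f (x + (0:ℝ) • d), d⟫ := by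
      simp [g, inner_sub_left]
    have h2 : ⟪gradient f (x + s • d) - gradient f (x + (0:ℝ) • d), d⟫ ≤
        ‖gradient f (x + s • d) - gradient f (x + (0:ℝ) • d)‖ * ‖d‖ :=
      real_inner_le_norm _ _
    have h3 : ‖gradient f (x + s • d) - gradient f (x + (0:ℝ) • d)‖ ≤ L * (s * ‖d‖) := by
      have := hlip (x + s • d) (x + (0:ℝ) • d)
      have heq : (x + s • d) - (x + (0:ℝ) • d) = s • d := by
        simp
      rw [heq] at this
      calc ‖gradient f (x + s • d) - gradient f (x + (0:ℝ) • d)‖ ≤ L * ‖s • d‖ := this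
        _ = L * (s * ‖d‖) := by rw [norm_smul, Real.norm_of_nonneg hs]
    calc g s - g 0 ≤ ‖gradient f (x + s • d) - gradient f (x + (0:ℝ) • d)‖ * ‖d‖ := by
          rw [h1]; exact h2
      _ ≤ (L * (s * ‖d‖)) * ‖d‖ := by
          apply mul_le_mul_of_nonneg_right h3 (norm_nonneg d)
      _ = K * s := by rw [hK]; ring
  -- descent lemma along the line: for t ≥ 0, φ t ≤ φ 0 + t * g 0 + K/2 * t^2
  have hdescent : ∀ t : ℝ, 0 ≤ t → φ t ≤ φ 0 + t * g 0 + K / 2 * t ^ 2 := by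
    intro t ht
    set ψ : ℝ → ℝ := fun s => φ s - s * g 0 - K / 2 * s ^ 2 with hψ
    have hψder : ∀ s : ℝ, HasDerivAt ψ (g s - g 0 - K * s) s := by
      intro s
      have h1 : HasDerivAt (fun s : ℝ => s * g 0) (g 0) s := by
        simpa using (hasDerivAt_id s).mul_const (g 0)
      have h2 : HasDerivAt (fun s : ℝ => K / 2 * s ^ 2) (K * s) s := by
        have := (hasDerivAt_pow 2 s).const_mul (K / 2)
        simpa [pow_one] using this.congr_deriv (by ring)
      exact ((hφder s).sub h1).sub h2
    have hanti : AntitoneOn ψ (Set.Ici (0:ℝ)) := by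
      apply antitoneOn_of_deriv_nonpos (convex_Ici 0)
      · exact fun s _ => ((hψder s).continuousAt).continuousWithinAt
      · intro s hs
        exact ((hψder s).differentiableAt).differentiableWithinAt
      · intro s hs
        rw [interior_Ici] at hs
        rw [(hψder s).deriv]
        have := hglip s (le_of_lt hs)
        linarith
    have := hanti (Set.self_mem_Ici) (Set.mem_Ici.mpr ht) ht
    have hψ0 : ψ 0 = φ 0 := by simp [hψ]
    have hψt : ψ t = φ t - t * g 0 - K / 2 * t ^ 2 := rfl
    rw [hψ0, hψt] at this
    linarith
  -- evaluate at t* = -g 0 / K > 0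
  set tstar : ℝ := -g 0 / K with htstar
  have htstarpos : 0 < tstar := div_pos (by linarith) hKpos
  have hstar : φ tstar ≤ φ 0 - (g 0) ^ 2 / (2 * K) := by
    have := hdescent tstar (le_of_lt htstarpos)
    have h1 : tstar * g 0 = -(g 0) ^ 2 / K := by
      rw [htstar]; field_simp
    have h2 : K / 2 * tstar ^ 2 = (g 0) ^ 2 / (2 * K) := by
      rw [htstar]; field_simp
    rw [h1, h2] at this
    have hKne : K ≠ 0 := ne_of_gt hKpos
    have : φ tstar ≤ φ 0 + -(g 0) ^ 2 / K + (g 0) ^ 2 / (2 * K) := this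
    have heq : φ 0 + -(g 0) ^ 2 / K + (g 0) ^ 2 / (2 * K) = φ 0 - (g 0) ^ 2 / (2 * K) := by
      field_simp; ring
    linarith [heq ▸ this]
  -- minimality of tplus
  have hmin : φ tplus ≤ φ 0 - (g 0) ^ 2 / (2 * K) :=
    le_trans (htplus tstar) hstar
  -- convexity lower bound: φ 0 + tplus * g 0 ≤ φ tplus
  have hφconv : ConvexOn ℝ Set.univ φ := by
    have := hconv.comp_affineMap (AffineMap.lineMap x (x + d) : ℝ →ᵃ[ℝ] EuclideanSpace ℝ (Fin n))
    have heq : φ = f ∘ (AffineMap.lineMap x (x + d) : ℝ →ᵃ[ℝ] EuclideanSpace ℝ (Fin n)) := by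
      funext t
      simp [φ, AffineMap.lineMap_apply, add_comm]
    rw [heq]
    simpa using this
  have hlower : φ 0 + tplus * g 0 ≤ φ tplus := by
    rcases lt_trichotomy tplus 0 with h | h | h
    · have := hφconv.slope_le_of_hasDerivAt (Set.mem_univ tplus) (Set.mem_univ 0) h (hφder 0)
      rw [slope_def_field] at this
      have h0 : (φ 0 - φ tplus) / (0 - tplus) ≤ g 0 := this
      have hpos : 0 < -tplus := by linarith
      rw [div_le_iff₀ (by linarith : (0:ℝ) < 0 - tplus)] at h0
      nlinarith
    · simp [h]
    · have := hφconv.le_slope_of_hasDerivAt (Set.mem_univ 0) (Set.mem_univ tplus) h (hφder 0)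
      rw [slope_def_field] at this
      have h0 : g 0 ≤ (φ tplus - φ 0) / (tplus - 0) := this
      rw [le_div_iff₀ (by linarith : (0:ℝ) < tplus - 0)] at h0
      nlinarith
  -- combine
  have h2K : (0:ℝ) < 2 * K := by linarith
  have hkey : tplus * g 0 ≤ -(g 0 ^ 2 / (2 * K)) := by
    have : φ 0 + tplus * g 0 ≤ φ 0 - g 0 ^ 2 / (2 * K) := le_trans hlower hmin
    linarith
  have hkey' : tplus * g 0 * (2 * K) ≤ -(g 0 ^ 2) := by
    calc tplus * g 0 * (2 * K) ≤ -(g 0 ^ 2 / (2 * K)) * (2 * K) :=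
          mul_le_mul_of_nonneg_right hkey h2K.le
      _ = -(g 0 ^ 2) := by field_simp
  rw [← hg0]
  have hgoal : -g 0 / (2 * K) ≤ tplus := by
    rw [div_le_iff₀ h2K]
    nlinarith [hkey', hg0neg]
  have : 2 * L * ‖d‖ ^ 2 = 2 * K := by rw [hK]; ring
  rw [this]
  exact hgoal
end

section
/- Let f : ℝⁿ → ℝ be differentiable, m-strongly convex, and have L-Lipschitz gradient with 0 < m ≤ L. Let x ∈ ℝⁿ, let u be a unit vector with ⟨u, ∇f(x)⟩ < 0, let s₊ > 0 be the minimizer of s ↦ f(x + s u), and let β ∈ (0, 1). Then for every step size s ∈ [β² s₊, s₊], f(x + s u) ≤ f(x) − (β²/(2m))(1 − √(1 − m/L)) ⟨u, ∇f(x)⟩². -/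
open scoped RealInnerProductSpace

set_option maxHeartbeats 1000000 in
/-- Decrease guarantee for any step size in the approximately-exact window `[β² s₊, s₊]`
along a unit descent direction, for an `m`-strongly convex function with `L`-Lipschitz
gradient: `f(x + s u) ≤ f(x) − (β²/(2m))(1 − √(1 − m/L)) ⟨u, ∇f(x)⟩²`. -/
theorem stmt_12 {n : ℕ} (f : EuclideanSpace ℝ (Fin n) → ℝ) (m L : ℝ)
    (hm : 0 < m) (hmL : m ≤ L)
    (hdiff : Differentiable ℝ f)
    (hconv : ConvexOn ℝ Set.univ (fun y => f y - m / 2 * ‖y‖ ^ 2))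
    (hlip : ∀ x y, ‖gradient f x - gradient f y‖ ≤ L * ‖x - y‖)
    (x u : EuclideanSpace ℝ (Fin n)) (hu : ‖u‖ = 1)
    (hdesc : ⟪u, gradient f x⟫ < 0)
    (splus : ℝ) (hsplus_pos : 0 < splus)
    (hsplus : ∀ s : ℝ, f (x + splus • u) ≤ f (x + s • u))
    (β : ℝ) (hβ : β ∈ Set.Ioo (0 : ℝ) 1)
    (s : ℝ) (hs : s ∈ Set.Icc (β ^ 2 * splus) splus) :
    f (x + s • u) ≤
      f x - β ^ 2 / (2 * m) * (1 - Real.sqrt (1 - m / L)) * ⟪u, gradient f x⟫ ^ 2 := by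
  obtain ⟨hβ0, hβ1⟩ := hβ
  obtain ⟨hs1, hs2⟩ := hs
  have hL : 0 < L := lt_of_lt_of_le hm hmL
  set d : ℝ := ⟪u, gradient f x⟫ with hd
  -- derivative along the ray
  have hderiv : ∀ t : ℝ, HasDerivAt (fun s : ℝ => f (x + s • u))
      ⟪gradient f (x + t • u), u⟫ t := by
    intro t
    have h1 : HasDerivAt (fun s : ℝ => x + s • u) u t := by
      simpa using ((hasDerivAt_id t).smul_const u).const_add x
    have h2 := (hdiff (x + t • u)).hasGradientAt.hasFDerivAt
    refine (h2.comp_hasDerivAt t h1).congr_deriv ?_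
    rw [InnerProductSpace.toDual_apply_apply]
  -- the auxiliary function for the descent lemma
  set h : ℝ → ℝ := fun t => f x + d * t + L / 2 * t ^ 2 - f (x + t • u) with hh
  have hhderiv : ∀ t : ℝ, HasDerivAt h
      (d + L * t - ⟪gradient f (x + t • u), u⟫) t := by
    intro t
    have h1 : HasDerivAt (fun t : ℝ => f x + d * t + L / 2 * t ^ 2) (d + L * t) t := by
      have := (((hasDerivAt_id t).const_mul d).const_add (f x)).add
        (((hasDerivAt_pow 2 t)).const_mul (L / 2))
      refine this.congr_deriv ?_
      simp; ring
    exact h1.sub (hderiv t)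
  have hmono : MonotoneOn h (Set.Ici (0 : ℝ)) := by
    apply monotoneOn_of_deriv_nonneg (convex_Ici 0)
    · have hc : Continuous (fun t : ℝ => f (x + t • u)) :=
        hdiff.continuous.comp (by continuity)
      exact Continuous.continuousOn (continuous_iff_continuousAt.mpr fun t => (hhderiv t).continuousAt)
    · intro t ht
      exact (hhderiv t).differentiableAt.differentiableWithinAt
    · intro t ht
      rw [interior_Ici] at ht
      rw [(hhderiv t).deriv]
      have h1 : ⟪gradient f (x + t • u) - gradient f x, u⟫
          ≤ ‖gradient f (x + t • u) - gradient f x‖ * ‖u‖ := real_inner_le_norm _ _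
      have h2 : ‖gradient f (x + t • u) - gradient f x‖ ≤ L * t := by
        have := hlip (x + t • u) x
        simpa [norm_smul, abs_of_pos (show (0:ℝ) < t from ht), hu] using this
      have h3 : ⟪gradient f x, u⟫ = d := real_inner_comm _ _
      have h4 : ⟪gradient f (x + t • u), u⟫
          = ⟪gradient f (x + t • u) - gradient f x, u⟫ + ⟪gradient f x, u⟫ := by
        rw [← inner_add_left]
        congr 1
        abel
      have key : ⟪gradient f (x + t • u), u⟫ ≤ d + L * t := by
        rw [h4, h3, hu] at *
        linarith [h1, h2]
      linarith
  -- descent at the trial step -d/L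
  have htrial : (0 : ℝ) ≤ -d / L := div_nonneg (by linarith) hL.le
  have h0 : h 0 = 0 := by simp [hh]
  have hge : 0 ≤ h (-d / L) := by
    have := hmono Set.self_mem_Ici (Set.mem_Ici.mpr htrial) htrial
    simpa [h0] using this
  have hstep : f (x + (-d / L) • u) ≤ f x - d ^ 2 / (2 * L) := by
    have heq : f x + d * (-d / L) + L / 2 * (-d / L) ^ 2 = f x - d ^ 2 / (2 * L) := by
      field_simp
      ring
    have : f x + d * (-d / L) + L / 2 * (-d / L) ^ 2 - f (x + (-d / L) • u) = h (-d / L) := rfl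
    linarith [hge, this ▸ hge]
  have hplus : f (x + splus • u) ≤ f x - d ^ 2 / (2 * L) := (hsplus (-d / L)).trans hstep
  -- convexity of f
  have hfconv : ConvexOn ℝ Set.univ f :=
    (strongConvexOn_iff_convex.mpr hconv).convexOn (fun r => by positivity)
  -- interpolation
  set b : ℝ := s / splus with hbdef
  have hs0 : 0 ≤ s := le_trans (by positivity) hs1
  have hb0 : 0 ≤ b := div_nonneg hs0 hsplus_pos.le
  have hb1 : b ≤ 1 := (div_le_one hsplus_pos).mpr hs2
  have hbβ : β ^ 2 ≤ b := (le_div_iff₀ hsplus_pos).mpr (by linarith)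
  have hpt : (1 - b) • x + b • (x + splus • u) = x + s • u := by
    have hbs : b * splus = s := div_mul_cancel₀ s hsplus_pos.ne'
    rw [smul_add, smul_smul, hbs]
    module
  have hcomb := hfconv.2 (Set.mem_univ x) (Set.mem_univ (x + splus • u))
    (by linarith : (0:ℝ) ≤ 1 - b) hb0 (by ring)
  rw [hpt] at hcomb
  have hmain : f (x + s • u) ≤ f x - β ^ 2 * (d ^ 2 / (2 * L)) := by
    simp only [smul_eq_mul] at hcomb
    have hd2 : 0 ≤ d ^ 2 / (2 * L) := by positivity
    calc f (x + s • u) ≤ (1 - b) * f x + b * f (x + splus • u) := hcomb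
      _ ≤ (1 - b) * f x + b * (f x - d ^ 2 / (2 * L)) := by
          have := mul_le_mul_of_nonneg_left hplus hb0
          linarith
      _ = f x - b * (d ^ 2 / (2 * L)) := by ring
      _ ≤ f x - β ^ 2 * (d ^ 2 / (2 * L)) := by
          have := mul_le_mul_of_nonneg_right hbβ hd2
          linarith
  -- the algebraic comparison of constants
  set t : ℝ := Real.sqrt (1 - m / L) with htdef
  have harg : 0 ≤ 1 - m / L := by
    rw [sub_nonneg]
    exact (div_le_one hL).mpr hmL
  have ht0 : 0 ≤ t := Real.sqrt_nonneg _
  have ht2 : t ^ 2 = 1 - m / L := Real.sq_sqrt harg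
  have ht1 : t ≤ 1 := Real.sqrt_le_one.mpr (by linarith [div_pos hm hL])
  have key : L * (1 - t) ≤ m := by
    have hml : m = L * (1 - t ^ 2) := by
      field_simp at ht2 ⊢
      linarith [ht2]
    nlinarith [mul_nonneg (mul_nonneg hL.le ht0) (sub_nonneg.mpr ht1)]
  have hfin : β ^ 2 / (2 * m) * (1 - t) * d ^ 2 ≤ β ^ 2 * (d ^ 2 / (2 * L)) := by
    rw [div_mul_eq_mul_div, div_mul_eq_mul_div, mul_div_assoc' (β ^ 2), div_le_div_iff₀
      (by positivity) (by positivity)]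
    nlinarith [mul_le_mul_of_nonneg_left key (by positivity : (0:ℝ) ≤ β ^ 2 * d ^ 2)]
  linarith
end

section
/- Let f : ℝⁿ → ℝ be differentiable, m-strongly convex, and have L-Lipschitz gradient with 0 < m ≤ L. Let x ∈ ℝⁿ, let d ≠ 0 be a descent direction at x (⟨d, ∇f(x)⟩ < 0), let t₊ > 0 be the minimizer of t ↦ f(x + t d), and let t_a > 0 be the unique positive solution of f(x + s d) = f(x) + (s/2)⟨d, ∇f(x)⟩. Then for every t ∈ (0, t₊], f(x + t d) ≤ f(x) + (min(t, t_a)/2)⟨d, ∇f(x)⟩. -/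
open scoped RealInnerProductSpace

/-- Any step size `t ∈ (0, t₊]` (where `t₊` is the exact line search minimizer) achieves
at least the Armijo decrease associated with `min(t, t_a)`, where `t_a` is the step size
satisfying the Armijo condition (parameter `1/2`) with equality. -/
theorem stmt_14 {n : ℕ} (f : EuclideanSpace ℝ (Fin n) → ℝ) (m L : ℝ)
    (hm : 0 < m) (hmL : m ≤ L)
    (hdiff : Differentiable ℝ f)
    (hconv : ConvexOn ℝ Set.univ (fun y => f y - m / 2 * ‖y‖ ^ 2))
    (hlip : ∀ x y, ‖gradient f x - gradient f y‖ ≤ L * ‖x - y‖)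
    (x d : EuclideanSpace ℝ (Fin n)) (hd : d ≠ 0)
    (hdesc : ⟪d, gradient f x⟫ < 0)
    (tplus : ℝ) (htplus_pos : 0 < tplus)
    (htplus : ∀ s : ℝ, f (x + tplus • d) ≤ f (x + s • d))
    (ta : ℝ) (hta_pos : 0 < ta)
    (hta : f (x + ta • d) = f x + ta / 2 * ⟪d, gradient f x⟫)
    (hta_unique : ∀ s : ℝ, 0 < s →
      f (x + s • d) = f x + s / 2 * ⟪d, gradient f x⟫ → s = ta) :
    ∀ t : ℝ, t ∈ Set.Ioc (0 : ℝ) tplus →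
      f (x + t • d) ≤ f x + min t ta / 2 * ⟪d, gradient f x⟫ := by
  -- f is convex
  have hsq : ConvexOn ℝ Set.univ (fun y : EuclideanSpace ℝ (Fin n) => m / 2 * ‖y‖ ^ 2) := by
    have h1 : ConvexOn ℝ Set.univ (fun y : EuclideanSpace ℝ (Fin n) => ‖y‖ ^ 2) := by
      refine ⟨convex_univ, fun u _ v _ a b ha hb hab => ?_⟩
      simp only [smul_eq_mul]
      have hn : ‖a • u + b • v‖ ≤ a * ‖u‖ + b * ‖v‖ := by
        calc ‖a • u + b • v‖ ≤ ‖a • u‖ + ‖b • v‖ := norm_add_le _ _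
          _ = a * ‖u‖ + b * ‖v‖ := by
            rw [norm_smul, norm_smul, Real.norm_eq_abs, Real.norm_eq_abs,
              abs_of_nonneg ha, abs_of_nonneg hb]
      calc ‖a • u + b • v‖ ^ 2 ≤ (a * ‖u‖ + b * ‖v‖) ^ 2 := by
            apply pow_le_pow_left₀ (norm_nonneg _) hn
        _ ≤ a * ‖u‖ ^ 2 + b * ‖v‖ ^ 2 := by
            nlinarith [sq_nonneg (‖u‖ - ‖v‖), norm_nonneg u, norm_nonneg v,
              mul_nonneg ha hb]
    simpa using h1.smul (by positivity : (0:ℝ) ≤ m / 2)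
  have hfconv : ConvexOn ℝ Set.univ f := by
    have := hconv.add hsq
    have hf : f = (fun y => f y - m / 2 * ‖y‖ ^ 2) + (fun y => m / 2 * ‖y‖ ^ 2) := by
      funext y; simp
    rw [hf]; exact this
  intro t ht
  obtain ⟨ht0, http⟩ := ht
  rcases le_or_gt t ta with hcase | hcase
  · rw [min_eq_left hcase]
    -- convex combination of 0 and ta
    have hb0 : (0:ℝ) ≤ t / ta := by positivity
    have ha0 : (0:ℝ) ≤ (ta - t) / ta := by
      apply div_nonneg (by linarith) hta_pos.le
    have hab : (ta - t) / ta + t / ta = 1 := by field_simp; ring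
    have := hfconv.2 (Set.mem_univ x) (Set.mem_univ (x + ta • d)) ha0 hb0 hab
    have hpt : ((ta - t) / ta) • x + (t / ta) • (x + ta • d) = x + t • d := by
      rw [smul_add, smul_smul]
      rw [← add_assoc, ← add_smul, hab, one_smul]
      congr 1
      field_simp
    rw [hpt] at this
    calc f (x + t • d) ≤ ((ta - t)/ta) * f x + (t/ta) * f (x + ta • d) := this
      _ = f x + t / 2 * ⟪d, gradient f x⟫ := by
          rw [hta]; field_simp; ring
  · rw [min_eq_right hcase.le]
    have htpta : ta < tplus := lt_of_lt_of_le hcase http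
    set c := ⟪d, gradient f x⟫
    have hden : (0:ℝ) < tplus - ta := by linarith
    have ha0 : (0:ℝ) ≤ (tplus - t) / (tplus - ta) := div_nonneg (by linarith) hden.le
    have hb0 : (0:ℝ) ≤ (t - ta) / (tplus - ta) := div_nonneg (by linarith) hden.le
    have hab : (tplus - t) / (tplus - ta) + (t - ta) / (tplus - ta) = 1 := by field_simp; ring
    have hcv := hfconv.2 (Set.mem_univ (x + ta • d)) (Set.mem_univ (x + tplus • d)) ha0 hb0 hab
    have hpt : ((tplus - t)/(tplus - ta)) • (x + ta • d) + ((t - ta)/(tplus - ta)) • (x + tplus • d) = x + t • d := by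
      rw [smul_add, smul_add, smul_smul, smul_smul]
      rw [add_add_add_comm, ← add_smul, hab, one_smul, ← add_smul]
      have hs : (tplus - t)/(tplus - ta) * ta + (t - ta)/(tplus - ta) * tplus = t := by
        field_simp
        ring
      rw [hs]
    rw [hpt] at hcv
    have hmin : f (x + tplus • d) ≤ f (x + ta • d) := htplus ta
    calc f (x + t • d) ≤ ((tplus - t)/(tplus - ta)) * f (x + ta • d) + ((t - ta)/(tplus - ta)) * f (x + tplus • d) := hcv
      _ ≤ ((tplus - t)/(tplus - ta)) * f (x + ta • d) + ((t - ta)/(tplus - ta)) * f (x + ta • d) := by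
          have := mul_le_mul_of_nonneg_left hmin hb0
          linarith
      _ = f (x + ta • d) := by field_simp; ring
      _ = f x + ta / 2 * c := hta
end

section
/- Let f : ℝⁿ → ℝ be differentiable and m-strongly convex (m > 0) with minimizer x_*. Let Δ > 0, let x ∈ ℝⁿ with ‖x − x_*‖ ≥ Δ, let σ̃ ∈ (0, 1), and let ρ ∈ ℝⁿ with ‖ρ‖ ≤ σ̃ m Δ. Set d = −∇f(x) + ρ. Then d ≠ 0 and (1 − σ̃)/(1 + σ̃)² ≤ (−⟨d, ∇f(x)⟩)/‖d‖² ≤ 1/(1 − σ̃). -/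
open scoped RealInnerProductSpace

set_option maxHeartbeats 2000000

/-- Bounds on `γ = −⟨d, ∇f(x)⟩/‖d‖²` for a search direction `d = −∇f(x) + ρ` obtained
from a gradient approximation with additive error `‖ρ‖ ≤ σ̃ m Δ`, when `f` is
`m`-strongly convex and `‖x − x_*‖ ≥ Δ`. -/
theorem stmt_15 {n : ℕ} (f : EuclideanSpace ℝ (Fin n) → ℝ) (m : ℝ) (hm : 0 < m)
    (hdiff : Differentiable ℝ f)
    (hconv : ConvexOn ℝ Set.univ (fun y => f y - m / 2 * ‖y‖ ^ 2))
    (xstar : EuclideanSpace ℝ (Fin n)) (hmin : ∀ y, f xstar ≤ f y)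
    (Δ : ℝ) (hΔ : 0 < Δ)
    (x : EuclideanSpace ℝ (Fin n)) (hx : Δ ≤ ‖x - xstar‖)
    (σt : ℝ) (hσt : σt ∈ Set.Ioo (0 : ℝ) 1)
    (ρ : EuclideanSpace ℝ (Fin n)) (hρ : ‖ρ‖ ≤ σt * m * Δ)
    (d : EuclideanSpace ℝ (Fin n)) (hd : d = -gradient f x + ρ) :
    d ≠ 0 ∧
      (1 - σt) / (1 + σt) ^ 2 ≤ -⟪d, gradient f x⟫ / ‖d‖ ^ 2 ∧
      -⟪d, gradient f x⟫ / ‖d‖ ^ 2 ≤ 1 / (1 - σt) := by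
  obtain ⟨hσ0, hσ1⟩ := hσt
  set g := gradient f x with hg
  set v := x - xstar with hv
  have hvpos : 0 < ‖v‖ := lt_of_lt_of_le hΔ hx
  -- the line p t = xstar + t • v
  set p : ℝ → EuclideanSpace ℝ (Fin n) := fun t => xstar + t • v with hp
  have hp0 : p 0 = xstar := by simp [hp]
  have hp1 : p 1 = x := by simp [hp, hv]
  have hpderiv : ∀ t : ℝ, HasDerivAt p v t := by
    intro t
    have h := ((hasDerivAt_id t).smul_const v).const_add xstar
    rw [one_smul] at h
    exact h
  -- φ = h ∘ p where h y = f y - m/2 ‖y‖²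
  set φ : ℝ → ℝ := fun t => f (p t) - m / 2 * ‖p t‖ ^ 2 with hφ
  have hφderiv : ∀ t : ℝ, HasDerivAt φ
      (fderiv ℝ f (p t) v - m / 2 * (2 * ⟪p t, v⟫)) t := by
    intro t
    have h1 : HasDerivAt (fun t => f (p t)) (fderiv ℝ f (p t) v) t :=
      (hdiff (p t)).hasFDerivAt.comp_hasDerivAt t (hpderiv t)
    have h2 : HasDerivAt (fun t => ⟪p t, p t⟫) (⟪p t, v⟫ + ⟪v, p t⟫) t :=
      (hpderiv t).inner ℝ (hpderiv t)
    have h2' : HasDerivAt (fun t => ‖p t‖ ^ 2) (2 * ⟪p t, v⟫) t := by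
      have : (fun t => ‖p t‖ ^ 2) = fun t => ⟪p t, p t⟫ := by
        funext t; rw [real_inner_self_eq_norm_sq]
      rw [this]
      convert h2 using 1
      rw [real_inner_comm v (p t)]; ring
    exact h1.sub (h2'.const_mul (m / 2))
  -- φ is convex
  have hφconv : ConvexOn ℝ Set.univ φ := by
    have haff : ConvexOn ℝ ((AffineMap.lineMap xstar x : ℝ →ᵃ[ℝ] EuclideanSpace ℝ (Fin n)) ⁻¹'
        Set.univ) ((fun y => f y - m / 2 * ‖y‖ ^ 2) ∘ (AffineMap.lineMap xstar x)) :=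
      hconv.comp_affineMap _
    rw [Set.preimage_univ] at haff
    convert haff using 1
    funext t
    simp only [hφ, hp, hv, Function.comp_apply, AffineMap.lineMap_apply_module]
    have : xstar + t • (x - xstar) = (1 - t) • xstar + t • x := by module
    rw [this]
  -- monotonicity of deriv φ : deriv φ 0 ≤ deriv φ 1
  have hmono := hφconv.monotoneOn_deriv (fun t _ => (hφderiv t).differentiableAt)
  have h01 : deriv φ 0 ≤ deriv φ 1 :=
    hmono (Set.mem_univ 0) (Set.mem_univ 1) (by norm_num)
  rw [(hφderiv 0).deriv, (hφderiv 1).deriv, hp0, hp1] at h01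
  -- fderiv f at xstar is zero
  have hlocmin : IsLocalMin f xstar := Filter.Eventually.of_forall hmin
  have hfd0 : fderiv ℝ f xstar = 0 := hlocmin.fderiv_eq_zero
  rw [hfd0] at h01
  simp only [ContinuousLinearMap.zero_apply] at h01
  -- fderiv f x v ≥ m ‖v‖²
  have hkey : m * ‖v‖ ^ 2 ≤ fderiv ℝ f x v := by
    have : ⟪x, v⟫ - ⟪xstar, v⟫ = ‖v‖ ^ 2 := by
      rw [← inner_sub_left, ← hv, real_inner_self_eq_norm_sq]
    nlinarith [h01, this]
  -- inner g v = fderiv f x v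
  have hgv : ⟪g, v⟫ = fderiv ℝ f x v := by
    rw [hg]
    exact InnerProductSpace.toDual_symm_apply
  -- ‖g‖ ≥ m ‖v‖
  have hG : m * ‖v‖ ≤ ‖g‖ := by
    have h1 : ⟪g, v⟫ ≤ ‖g‖ * ‖v‖ := real_inner_le_norm g v
    nlinarith [hkey, hgv, hvpos]
  have hGΔ : m * Δ ≤ ‖g‖ := le_trans (by nlinarith) hG
  have hGpos : 0 < ‖g‖ := lt_of_lt_of_le (by positivity) hGΔ
  have hR : ‖ρ‖ ≤ σt * ‖g‖ := le_trans hρ (by nlinarith)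
  -- d = -(g - ρ)
  have hd' : d = -(g - ρ) := by rw [hd]; abel
  have hDlow : ‖g‖ - ‖ρ‖ ≤ ‖d‖ := by
    rw [hd', norm_neg]
    exact norm_sub_norm_le g ρ
  have hDhigh : ‖d‖ ≤ ‖g‖ + ‖ρ‖ := by
    rw [hd', norm_neg]
    exact norm_sub_le g ρ
  have hGle : ‖g‖ ≤ ‖d‖ + ‖ρ‖ := by
    have : g = -d + ρ := by rw [hd']; abel
    calc ‖g‖ = ‖-d + ρ‖ := by rw [this]
    _ ≤ ‖-d‖ + ‖ρ‖ := norm_add_le _ _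
    _ = ‖d‖ + ‖ρ‖ := by rw [norm_neg]
  have hDpos : 0 < ‖d‖ := by nlinarith [norm_nonneg ρ]
  have hdne : d ≠ 0 := fun h => by simp [h] at hDpos
  -- inner products
  have hI1 : ‖g‖ ^ 2 - ‖ρ‖ * ‖g‖ ≤ -⟪d, g⟫ := by
    have : -⟪d, g⟫ = ⟪g, g⟫ - ⟪ρ, g⟫ := by
      rw [hd']; rw [inner_neg_left, inner_sub_left]; ring
    rw [this, real_inner_self_eq_norm_sq]
    nlinarith [real_inner_le_norm ρ g]
  have hI2 : -⟪d, g⟫ ≤ ‖d‖ ^ 2 + ‖d‖ * ‖ρ‖ := by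
    have hge : g = -d + ρ := by rw [hd']; abel
    have : -⟪d, g⟫ = ⟪d, d⟫ - ⟪d, ρ⟫ := by
      rw [hge, inner_add_right, inner_neg_right, real_inner_comm]
      ring
    rw [this, real_inner_self_eq_norm_sq]
    nlinarith [real_inner_le_norm d ρ, neg_le_of_abs_le (abs_real_inner_le_norm d ρ)]
  set I : ℝ := ⟪d, g⟫ with hIdef
  clear_value I
  have hb1 : ‖d‖ ^ 2 ≤ (1 + σt) ^ 2 * ‖g‖ ^ 2 := by
    nlinarith [hDhigh, hR, hDpos.le, hGpos.le, norm_nonneg ρ]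
  have hb2 : (1 - σt) * ‖g‖ ^ 2 ≤ -I := by nlinarith [hI1, hR, hGpos.le]
  refine ⟨hdne, ?_, ?_⟩
  · rw [div_le_div_iff₀ (by positivity) (pow_pos hDpos 2)]
    calc (1 - σt) * ‖d‖ ^ 2 ≤ (1 - σt) * ((1 + σt) ^ 2 * ‖g‖ ^ 2) :=
          mul_le_mul_of_nonneg_left hb1 (by linarith)
      _ = (1 + σt) ^ 2 * ((1 - σt) * ‖g‖ ^ 2) := by ring
      _ ≤ (1 + σt) ^ 2 * (-I) := mul_le_mul_of_nonneg_left hb2 (by positivity)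
      _ = -I * (1 + σt) ^ 2 := by ring
  · rw [div_le_div_iff₀ (pow_pos hDpos 2) (by linarith)]
    have hRD : (1 - σt) * ‖ρ‖ ≤ σt * ‖d‖ := by nlinarith [hR, hGle]
    have h3 : (1 - σt) * (-I) ≤ ‖d‖ ^ 2 := by
      nlinarith [mul_le_mul_of_nonneg_left hI2 (by linarith : (0:ℝ) ≤ 1 - σt),
        mul_le_mul_of_nonneg_left hRD hDpos.le]
    linarith
end

section
/- Let f : ℝⁿ → ℝ be differentiable, m-strongly convex, and have L-Lipschitz gradient with 0 < m ≤ L. Let x ∈ ℝⁿ, let d ≠ 0 be a descent direction at x (⟨d, ∇f(x)⟩ < 0), and let c₂ ∈ (0, 1). Then there exists t₀ > 0 with ⟨d, ∇f(x + t₀ d)⟩ = 0 such that every t ∈ ℝ with |t − t₀| ≤ c₂(−⟨d, ∇f(x)⟩)/(L‖d‖²) satisfies the strong Wolfe curvature condition |⟨d, ∇f(x + t d)⟩| ≤ c₂ |⟨d, ∇f(x)⟩|. In particular, the set of step sizes satisfying the strong Wolfe curvature condition contains an interval of length at least 2 c₂(−⟨d, ∇f(x)⟩)/(L‖d‖²).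 -/
open scoped RealInnerProductSpace

/-- The set of step sizes satisfying the strong Wolfe curvature condition contains an
interval of radius `c₂(−⟨d, ∇f(x)⟩)/(L‖d‖²)` around the step size `t₀` at which the
directional derivative along the line vanishes. -/
theorem stmt_17 {n : ℕ} (f : EuclideanSpace ℝ (Fin n) → ℝ) (m L : ℝ)
    (hm : 0 < m) (hmL : m ≤ L)
    (hdiff : Differentiable ℝ f)
    (hconv : ConvexOn ℝ Set.univ (fun y => f y - m / 2 * ‖y‖ ^ 2))
    (hlip : ∀ x y, ‖gradient f x - gradient f y‖ ≤ L * ‖x - y‖)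
    (x d : EuclideanSpace ℝ (Fin n)) (hd : d ≠ 0)
    (hdesc : ⟪d, gradient f x⟫ < 0)
    (c₂ : ℝ) (hc₂ : c₂ ∈ Set.Ioo (0 : ℝ) 1) :
    ∃ t₀ : ℝ, 0 < t₀ ∧ ⟪d, gradient f (x + t₀ • d)⟫ = 0 ∧
      ∀ t : ℝ, |t - t₀| ≤ c₂ * (-⟪d, gradient f x⟫) / (L * ‖d‖ ^ 2) →
        |⟪d, gradient f (x + t • d)⟫| ≤ c₂ * |⟪d, gradient f x⟫| := by
  obtain ⟨hc₂0, hc₂1⟩ := hc₂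
  have hL : 0 < L := lt_of_lt_of_le hm hmL
  have hdpos : (0:ℝ) < ‖d‖ := norm_pos_iff.mpr hd
  set g : ℝ → ℝ := fun t => ⟪d, gradient f (x + t • d)⟫ with hgdef
  -- the curve t ↦ x + t • d
  have hc : ∀ t : ℝ, HasDerivAt (fun s : ℝ => x + s • d) d t := by
    intro t
    simpa using ((hasDerivAt_id t).smul_const d).const_add x
  -- derivative of t ↦ f (x + t • d)
  have hfd : ∀ t : ℝ, HasDerivAt (fun s : ℝ => f (x + s • d)) (g t) t := by
    intro t
    have h1 := (hdiff (x + t • d)).hasGradientAt.hasFDerivAt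
    have h2 := h1.comp_hasDerivAt t (hc t)
    simp only [InnerProductSpace.toDual_apply_apply] at h2
    have h3 : HasDerivAt (fun s : ℝ => f (x + s • d)) ⟪gradient f (x + t • d), d⟫ t := h2
    rw [real_inner_comm] at h3
    exact h3
  -- Lipschitz-type bound for g
  have key : ∀ s t : ℝ, |g t - g s| ≤ L * ‖d‖ ^ 2 * |t - s| := by
    intro s t
    have h1 : g t - g s = ⟪d, gradient f (x + t • d) - gradient f (x + s • d)⟫ := by
      simp [hgdef, inner_sub_right]
    rw [h1]
    calc |⟪d, gradient f (x + t • d) - gradient f (x + s • d)⟫|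
        ≤ ‖d‖ * ‖gradient f (x + t • d) - gradient f (x + s • d)‖ :=
          abs_real_inner_le_norm _ _
      _ ≤ ‖d‖ * (L * ‖(x + t • d) - (x + s • d)‖) := by
          gcongr; exact hlip _ _
      _ = L * ‖d‖ ^ 2 * |t - s| := by
          have : (x + t • d) - (x + s • d) = (t - s) • d := by
            rw [sub_smul]; abel
          rw [this, norm_smul, Real.norm_eq_abs]; ring
  -- continuity of g
  have hgcont : Continuous g := by
    rw [Metric.continuous_iff]
    intro t ε hε
    refine ⟨ε / (L * ‖d‖ ^ 2 + 1), by positivity, fun s hs => ?_⟩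
    have h1 := key t s
    have h2 : L * ‖d‖ ^ 2 * |s - t| < ε := by
      have hpos : (0:ℝ) < L * ‖d‖ ^ 2 + 1 := by positivity
      calc L * ‖d‖ ^ 2 * |s - t| ≤ (L * ‖d‖ ^ 2 + 1) * |s - t| := by
            have := abs_nonneg (s - t); nlinarith
        _ < (L * ‖d‖ ^ 2 + 1) * (ε / (L * ‖d‖ ^ 2 + 1)) := by
            apply mul_lt_mul_of_pos_left _ hpos
            simpa [Real.dist_eq] using hs
        _ = ε := by field_simp
    calc dist (g s) (g t) = |g s - g t| := Real.dist_eq _ _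
      _ ≤ L * ‖d‖ ^ 2 * |s - t| := key t s
      _ < ε := h2
  -- strong convexity along the line: g t ≥ g 0 + m * t * ‖d‖² for t ≥ 0
  -- via convexity of ψ(t) = f(x+t•d) - m/2 ‖x+t•d‖²
  have hmono : ∀ t : ℝ, 0 ≤ t → g 0 + m * t * ‖d‖ ^ 2 ≤ g t := by
    intro t ht
    set ψ : ℝ → ℝ := fun s => f (x + s • d) - m / 2 * ‖x + s • d‖ ^ 2 with hψ
    have hψconv : ConvexOn ℝ Set.univ ψ := by
      have := hconv.comp_affineMap
        (AffineMap.lineMap x (x + d) : ℝ →ᵃ[ℝ] EuclideanSpace ℝ (Fin n))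
      have hpre : (AffineMap.lineMap x (x + d) : ℝ →ᵃ[ℝ] _) ⁻¹' Set.univ = Set.univ := by
        simp
      rw [hpre] at this
      have heq2 : ((fun y => f y - m / 2 * ‖y‖ ^ 2) ∘
          (AffineMap.lineMap x (x + d) : ℝ →ᵃ[ℝ] EuclideanSpace ℝ (Fin n))) = ψ := by
        funext s
        have heqs : (AffineMap.lineMap x (x + d) : ℝ →ᵃ[ℝ] EuclideanSpace ℝ (Fin n)) s
            = x + s • d := by
          rw [AffineMap.lineMap_apply]
          simp only [vadd_eq_add, vsub_eq_sub, add_sub_cancel_left]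
          exact add_comm _ _
        simp only [Function.comp_apply, heqs, hψ]
      rwa [heq2] at this
    have hψderiv : ∀ s : ℝ, HasDerivAt ψ (g s - m * ⟪d, x + s • d⟫) s := by
      intro s
      have h1 := hfd s
      have h2 : HasDerivAt (fun u : ℝ => ‖x + u • d‖ ^ 2) (2 * ⟪d, x + s • d⟫) s := by
        have h3 := (hc s).norm_sq
        rwa [real_inner_comm] at h3
      have := h1.sub ((h2.const_mul (m / 2)))
      rw [show g s - m * ⟪d, x + s • d⟫ = g s - m / 2 * (2 * ⟪d, x + s • d⟫) by ring]
      exact this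
    have hψdiff : ∀ s : ℝ, DifferentiableAt ℝ ψ s := fun s =>
      (hψderiv s).differentiableAt
    have hmono' := hψconv.monotoneOn_deriv (fun s _ => hψdiff s)
    have h0t : deriv ψ 0 ≤ deriv ψ t :=
      hmono' (Set.mem_univ 0) (Set.mem_univ t) ht
    rw [(hψderiv 0).deriv, (hψderiv t).deriv] at h0t
    have hinner : ∀ s : ℝ, ⟪d, x + s • d⟫ = ⟪d, x⟫ + s * ‖d‖ ^ 2 := by
      intro s
      rw [inner_add_right, real_inner_smul_right, real_inner_self_eq_norm_sq]
    have h5 : g 0 - m * ⟪d, x + (0:ℝ) • d⟫ ≤ g t - m * ⟪d, x + t • d⟫ := h0t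
    rw [hinner t, hinner 0] at h5
    nlinarith [h5]
  -- IVT to find t₀
  have hx0 : g 0 = ⟪d, gradient f x⟫ := by simp [hgdef]
  have hg0 : g 0 < 0 := by rw [hx0]; exact hdesc
  set T : ℝ := (-g 0) / (m * ‖d‖ ^ 2) with hT
  have hTpos : 0 < T := by
    apply div_pos (by linarith) (by positivity)
  have hgT : 0 ≤ g T := by
    have := hmono T hTpos.le
    have hTeq : m * T * ‖d‖ ^ 2 = -g 0 := by
      rw [hT]; field_simp
    linarith
  obtain ⟨t₀, ht₀mem, ht₀⟩ := intermediate_value_Icc hTpos.le hgcont.continuousOn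
    (show (0:ℝ) ∈ Set.Icc (g 0) (g T) from ⟨hg0.le, hgT⟩)
  have ht₀pos : 0 < t₀ := by
    rcases lt_or_eq_of_le ht₀mem.1 with h | h
    · exact h
    · exfalso; rw [← h] at ht₀; linarith
  refine ⟨t₀, ht₀pos, ht₀, fun t ht => ?_⟩
  have h1 : |g t| ≤ L * ‖d‖ ^ 2 * |t - t₀| := by
    have := key t₀ t
    rwa [ht₀, sub_zero] at this
  have h2 : L * ‖d‖ ^ 2 * |t - t₀| ≤ c₂ * (-g 0) := by
    have hLd : (0:ℝ) < L * ‖d‖ ^ 2 := by positivity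
    have ht' : |t - t₀| ≤ c₂ * (-g 0) / (L * ‖d‖ ^ 2) := by
      rw [hx0]; exact ht
    calc L * ‖d‖ ^ 2 * |t - t₀|
        ≤ L * ‖d‖ ^ 2 * (c₂ * (-g 0) / (L * ‖d‖ ^ 2)) :=
          mul_le_mul_of_nonneg_left ht' hLd.le
      _ = c₂ * (-g 0) := by field_simp
  have habs : |g 0| = -g 0 := abs_of_neg hg0
  calc |g t| ≤ c₂ * (-g 0) := le_trans h1 h2
    _ = c₂ * |⟪d, gradient f x⟫| := by rw [← habs, hx0]
end
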